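/- arXiv:1004.5494 — 4 statements merged into one kernel-verified Lean document; each statement's English description precedes it below -/
import Mathlib

section
/- Let Ω ⊆ ℝ² be open and W ⊆ ℝ² be open, and let P ∈ ∂Ω ∩ W. Assume that ∂Ω ∩ W is a one-dimensional C¹ submanifold of ℝ². Let φ : ℝ² → ℝ be continuously differentiable on W with φ = 0 at every point of ∂Ω ∩ W. If fderiv φ P ≠ 0, then P does not belong to the closure of {x ∈ Ω : φ(x) = 0}; equivalently, there is an open neighborhood U of P such that φ(x) ≠ 0 for every x ∈ U ∩ Ω. -/
open Set Filter Topology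

private lemma alg_inj (a b v1 v2 : ℝ) (hab : ¬(a = 0 ∧ b = 0)) (hv : ¬(v1 = 0 ∧ v2 = 0))
    (hortho : a * v1 + b * v2 = 0) (w1 w2 : ℝ)
    (h1 : a * w1 + b * w2 = 0) (h2 : v1 * w1 + v2 * w2 = 0) : w1 = 0 ∧ w2 = 0 := by
  have habs : a ^ 2 + b ^ 2 ≠ 0 := by
    intro h
    exact hab ⟨by nlinarith [sq_nonneg a, sq_nonneg b], by nlinarith [sq_nonneg a, sq_nonneg b]⟩
  have hdet : a * v2 - b * v1 ≠ 0 := by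
    intro hd
    have h3 : v1 * (a ^ 2 + b ^ 2) = 0 := by linear_combination a * hortho - b * hd
    have h4 : v2 * (a ^ 2 + b ^ 2) = 0 := by linear_combination b * hortho + a * hd
    exact hv ⟨(mul_eq_zero.mp h3).resolve_right habs, (mul_eq_zero.mp h4).resolve_right habs⟩
  constructor
  · have : w1 * (a * v2 - b * v1) = 0 := by linear_combination v2 * h1 - b * h2
    exact (mul_eq_zero.mp this).resolve_right hdet
  · have : w2 * (a * v2 - b * v1) = 0 := by linear_combination a * h2 - v1 * h1
    exact (mul_eq_zero.mp this).resolve_right hdet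

/-- `M` is a one-dimensional C¹ submanifold of `ℝ²`: near each of its points it is
the image of a regular C¹ local parametrization. -/
def IsC1Submanifold1D (M : Set (ℝ × ℝ)) : Prop :=
  ∀ Q ∈ M, ∃ (U : Set (ℝ × ℝ)) (γ : ℝ → ℝ × ℝ) (ε : ℝ),
    0 < ε ∧ IsOpen U ∧ Q ∈ U ∧
    ContDiffOn ℝ 1 γ (Set.Ioo (-ε) ε) ∧ γ 0 = Q ∧
    deriv γ 0 ≠ 0 ∧ γ '' Set.Ioo (-ε) ε = M ∩ U

set_option maxHeartbeats 1000000 in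
theorem nonvanishing_normal_derivative_implies_not_in_nodal_set
    (Ω W : Set (ℝ × ℝ)) (hΩ : IsOpen Ω) (hW : IsOpen W)
    (P : ℝ × ℝ) (hP : P ∈ frontier Ω ∩ W)
    (hman : IsC1Submanifold1D (frontier Ω ∩ W))
    (φ : ℝ × ℝ → ℝ) (hφ : ContDiffOn ℝ 1 φ W)
    (hzero : ∀ x ∈ frontier Ω ∩ W, φ x = 0)
    (hder : fderiv ℝ φ P ≠ 0) :
    P ∉ closure {x ∈ Ω | φ x = 0} ∧
      ∃ U : Set (ℝ × ℝ), IsOpen U ∧ P ∈ U ∧ ∀ x ∈ U ∩ Ω, φ x ≠ 0 := by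
  obtain ⟨hPf, hPW⟩ := hP
  obtain ⟨U, γ, ε, hε, hUopen, hPU, hγc, hγ0, hγd, himg⟩ := hman P ⟨hPf, hPW⟩
  set L := fderiv ℝ φ P with hL
  set v := deriv γ 0 with hv
  have hIoo : Set.Ioo (-ε) ε ∈ 𝓝 (0 : ℝ) :=
    isOpen_Ioo.mem_nhds ⟨by linarith, hε⟩
  have hγat : HasDerivAt γ v 0 :=
    ((hγc.contDiffAt hIoo).differentiableAt one_ne_zero).hasDerivAt
  have hφat : ContDiffAt ℝ 1 φ P := hφ.contDiffAt (hW.mem_nhds hPW)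
  have hφs : HasStrictFDerivAt φ L P := hφat.hasStrictFDerivAt one_ne_zero
  have hφ' : HasFDerivAt φ L P := hφs.hasFDerivAt
  have hγmem : ∀ t ∈ Set.Ioo (-ε) ε, γ t ∈ (frontier Ω ∩ W) ∩ U := by
    intro t ht
    rw [← himg]
    exact ⟨t, ht, rfl⟩
  have hzeroγ : ∀ t ∈ Set.Ioo (-ε) ε, φ (γ t) = 0 := fun t ht => hzero _ (hγmem t ht).1
  -- the derivative of φ annihilates the tangent vector v
  have hLv : L v = 0 := by
    have hφ'' : HasFDerivAt φ L (γ 0) := by rw [hγ0]; exact hφ'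
    have hcomp : HasDerivAt (φ ∘ γ) (L v) 0 := hφ''.comp_hasDerivAt 0 hγat
    have heq : (fun _ : ℝ => (0 : ℝ)) =ᶠ[𝓝 0] (φ ∘ γ) :=
      Filter.eventually_of_mem hIoo fun t ht => (hzeroγ t ht).symm
    have h0 : HasDerivAt (fun _ : ℝ => (0 : ℝ)) (L v) 0 := hcomp.congr_of_eventuallyEq heq
    exact ((hasDerivAt_const (0 : ℝ) (0 : ℝ)).unique h0).symm
  -- the auxiliary linear functional
  set L' : (ℝ × ℝ) →L[ℝ] ℝ :=
    v.1 • ContinuousLinearMap.fst ℝ ℝ ℝ + v.2 • ContinuousLinearMap.snd ℝ ℝ ℝ with hL'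
  have hL'app : ∀ w : ℝ × ℝ, L' w = v.1 * w.1 + v.2 * w.2 := by
    intro w; simp [hL']
  have hLexp : ∀ w : ℝ × ℝ, L w = w.1 * L (1, 0) + w.2 * L (0, 1) := by
    intro w
    have hw : w = w.1 • ((1 : ℝ), (0 : ℝ)) + w.2 • ((0 : ℝ), (1 : ℝ)) := by
      apply Prod.ext <;> simp
    calc L w = L (w.1 • ((1 : ℝ), (0 : ℝ)) + w.2 • ((0 : ℝ), (1 : ℝ))) := by rw [← hw]
      _ = _ := by rw [map_add, map_smul, map_smul]; simp [smul_eq_mul]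
  have hab : ¬(L (1, 0) = 0 ∧ L (0, 1) = 0) := by
    rintro ⟨ha, hb⟩
    apply hder
    apply ContinuousLinearMap.ext
    intro w
    rw [hLexp w, ha, hb]
    simp
  have hvne : ¬(v.1 = 0 ∧ v.2 = 0) := by
    rintro ⟨h1, h2⟩
    exact hγd (Prod.ext h1 h2)
  have hortho : L (1, 0) * v.1 + L (0, 1) * v.2 = 0 := by
    have := hLv
    rw [hLexp v] at this
    linarith
  -- the map F = (φ, L' ∘ translation) is a local homeomorphism at P
  set T : (ℝ × ℝ) →L[ℝ] (ℝ × ℝ) := L.prod L' with hT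
  have hTinj : Function.Injective T := by
    intro x y hxy
    have h0 : T (x - y) = 0 := by rw [map_sub, hxy, sub_self]
    have hpair : L (x - y) = 0 ∧ L' (x - y) = 0 := by
      have h1 : (L (x - y), L' (x - y)) = ((0 : ℝ), (0 : ℝ)) := h0
      exact ⟨congrArg Prod.fst h1, congrArg Prod.snd h1⟩
    have hc1 := hpair.1
    have hc2 := hpair.2
    rw [hLexp (x - y)] at hc1
    rw [hL'app (x - y)] at hc2
    have := alg_inj (L (1, 0)) (L (0, 1)) v.1 v.2 hab hvne hortho (x - y).1 (x - y).2
      (by linarith) (by linarith)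
    have hxy1 : x - y = 0 := Prod.ext this.1 this.2
    exact sub_eq_zero.mp hxy1
  have hTsurj : Function.Surjective T :=
    (LinearMap.injective_iff_surjective (f := ((T : (ℝ × ℝ) →L[ℝ] (ℝ × ℝ)) :
      (ℝ × ℝ) →ₗ[ℝ] (ℝ × ℝ)))).mp hTinj
  let e : (ℝ × ℝ) ≃ₗ[ℝ] (ℝ × ℝ) :=
    LinearEquiv.ofBijective ((T : (ℝ × ℝ) →L[ℝ] (ℝ × ℝ)) : (ℝ × ℝ) →ₗ[ℝ] (ℝ × ℝ))
      ⟨hTinj, hTsurj⟩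
  let e' : (ℝ × ℝ) ≃L[ℝ] (ℝ × ℝ) := e.toContinuousLinearEquiv
  set F : ℝ × ℝ → ℝ × ℝ := fun x => (φ x, L' x - L' P) with hF
  have hFs : HasStrictFDerivAt F (e' : (ℝ × ℝ) →L[ℝ] (ℝ × ℝ)) P := by
    have h1 : HasStrictFDerivAt F T P :=
      hφs.prodMk ((L'.hasStrictFDerivAt).sub_const (L' P))
    have h2 : ((e' : (ℝ × ℝ) ≃L[ℝ] (ℝ × ℝ)) : (ℝ × ℝ) →L[ℝ] (ℝ × ℝ)) = T := by
      apply ContinuousLinearMap.ext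
      intro w
      rfl
    rw [h2]
    exact h1
  set Φ := HasStrictFDerivAt.toOpenPartialHomeomorph F hFs with hΦ
  set N := Φ.source with hN
  have hNopen : IsOpen N := Φ.open_source
  have hPN : P ∈ N := hFs.mem_toOpenPartialHomeomorph_source
  have hFinj : Set.InjOn F N := by
    have := Φ.injOn
    rwa [hΦ, hFs.toOpenPartialHomeomorph_coe] at this
  -- choose a small radius r so that γ maps (-r, r) into N and into (-ε, ε)
  have hγcont : ContinuousAt γ 0 := hγc.continuousOn.continuousAt hIoo
  have hNnhds : N ∈ 𝓝 P := hNopen.mem_nhds hPN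
  have hpre : γ ⁻¹' N ∈ 𝓝 (0 : ℝ) := hγcont.preimage_mem_nhds (by rw [hγ0]; exact hNnhds)
  obtain ⟨r, hr, hrsub⟩ := Metric.mem_nhds_iff.mp (Filter.inter_mem hpre hIoo)
  have hball : ∀ t : ℝ, |t| < r → γ t ∈ N ∧ t ∈ Set.Ioo (-ε) ε := by
    intro t ht
    have : t ∈ γ ⁻¹' N ∩ Set.Ioo (-ε) ε :=
      hrsub (by simpa [Metric.mem_ball, Real.dist_eq] using ht)
    exact ⟨this.1, this.2⟩
  -- the function ψ along the curve
  set ψ : ℝ → ℝ := fun t => L' (γ t) - L' P with hψ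
  have hψ0 : ψ 0 = 0 := by simp [hψ, hγ0]
  have hc : 0 < L' v := by
    rw [hL'app]
    rcases not_and_or.mp hvne with h | h
    · nlinarith [mul_self_pos.mpr h, mul_self_nonneg v.2]
    · nlinarith [mul_self_pos.mpr h, mul_self_nonneg v.1]
  have hψat : HasDerivAt ψ (L' v) 0 := by
    have h1 : HasDerivAt (fun t => L' (γ t)) (L' v) 0 := by
      have h2 : HasFDerivAt L' (L' : (ℝ × ℝ) →L[ℝ] ℝ) (γ 0) := L'.hasFDerivAt
      exact h2.comp_hasDerivAt 0 hγat
    exact h1.sub_const (L' P)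
  have hslope := hasDerivAt_iff_tendsto_slope.mp hψat
  have hev : ∀ᶠ t in 𝓝[≠] (0 : ℝ), 0 < slope ψ 0 t := hslope.eventually (eventually_gt_nhds hc)
  -- find tp > 0 with ψ tp > 0
  have hposside : ∀ᶠ t in 𝓝[>] (0 : ℝ), 0 < slope ψ 0 t :=
    hev.filter_mono (nhdsWithin_mono 0 (by intro x hx; simpa using ne_of_gt hx))
  have hIr : Set.Ioo (0 : ℝ) r ∈ 𝓝[>] (0 : ℝ) := Ioo_mem_nhdsGT_of_mem ⟨le_refl 0, hr⟩
  obtain ⟨tp, htp_slope, htp_mem⟩ :=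
    (hposside.and (Filter.eventually_of_mem hIr fun t ht => ht)).exists
  have htp_pos : 0 < tp := htp_mem.1
  have hψtp : 0 < ψ tp := by
    rw [slope_def_field] at htp_slope
    rw [hψ0, sub_zero, sub_zero] at htp_slope
    have := mul_pos htp_slope htp_pos
    rwa [div_mul_cancel₀ _ (ne_of_gt htp_pos)] at this
  -- find tm < 0 with ψ tm < 0
  have hnegside : ∀ᶠ t in 𝓝[<] (0 : ℝ), 0 < slope ψ 0 t :=
    hev.filter_mono (nhdsWithin_mono 0 (by intro x hx; simpa using ne_of_lt hx))
  have hIl : Set.Ioo (-r) (0 : ℝ) ∈ 𝓝[<] (0 : ℝ) :=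
    Ioo_mem_nhdsLT_of_mem ⟨by linarith, le_refl 0⟩
  obtain ⟨tm, htm_slope, htm_mem⟩ :=
    (hnegside.and (Filter.eventually_of_mem hIl fun t ht => ht)).exists
  have htm_neg : tm < 0 := htm_mem.2
  have hψtm : ψ tm < 0 := by
    rw [slope_def_field] at htm_slope
    rw [hψ0, sub_zero, sub_zero] at htm_slope
    have := mul_neg_of_pos_of_neg htm_slope htm_neg
    rwa [div_mul_cancel₀ _ (ne_of_lt htm_neg)] at this
  set δ := min (ψ tp) (-ψ tm) with hδ
  have hδpos : 0 < δ := lt_min hψtp (by linarith)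
  have habs_lt : ∀ t ∈ Set.Icc tm tp, |t| < r := by
    intro t ht
    rw [abs_lt]
    exact ⟨by linarith [ht.1, htm_mem.1], by linarith [ht.2, htp_mem.2]⟩
  have hψcont : ContinuousOn ψ (Set.Icc tm tp) := by
    apply ContinuousOn.sub _ continuousOn_const
    exact L'.continuous.comp_continuousOn
      (hγc.continuousOn.mono fun t ht => (hball t (habs_lt t ht)).2)
  have htmtp : tm ≤ tp := by linarith
  have hIVT := intermediate_value_Icc htmtp hψcont
  -- the final neighbourhood
  set U₀ := N ∩ ((fun x => L' x - L' P) ⁻¹' Set.Ioo (-δ) δ) with hU₀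
  have hU₀open : IsOpen U₀ :=
    hNopen.inter (isOpen_Ioo.preimage (L'.continuous.sub continuous_const))
  have hPU₀ : P ∈ U₀ := ⟨hPN, by simp [hδpos]⟩
  have hkey : ∀ x ∈ U₀ ∩ Ω, φ x ≠ 0 := by
    rintro x ⟨⟨hxN, hxs⟩, hxΩ⟩ hφx
    simp only [Set.mem_preimage, Set.mem_Ioo] at hxs
    have hs : L' x - L' P ∈ Set.Icc (ψ tm) (ψ tp) := by
      constructor
      · have h1 : δ ≤ -ψ tm := min_le_right _ _
        linarith [hxs.1]
      · have h1 : δ ≤ ψ tp := min_le_left _ _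
        linarith [hxs.2]
    obtain ⟨t, htIcc, hts⟩ := hIVT hs
    have htball := hball t (habs_lt t htIcc)
    have hφγ : φ (γ t) = 0 := hzeroγ t htball.2
    have hFeq : F (γ t) = F x := by
      show (φ (γ t), L' (γ t) - L' P) = (φ x, L' x - L' P)
      rw [hφγ, hφx]
      exact Prod.ext rfl hts
    have hxeq : γ t = x := hFinj htball.1 hxN hFeq
    have hxf : x ∈ frontier Ω := by
      rw [← hxeq]
      exact (hγmem t htball.2).1.1
    rw [hΩ.frontier_eq] at hxf
    exact hxf.2 hxΩ
  constructor
  · intro hmem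
    obtain ⟨y, hyU₀, hyset⟩ := mem_closure_iff.mp hmem U₀ hU₀open hPU₀
    exact hkey y ⟨hyU₀, hyset.1⟩ hyset.2
  · exact ⟨U₀, hU₀open, hPU₀, hkey⟩
end

section
/- Let Ω ⊆ ℝ² be open and bounded, let λ ≥ 0 be a real number, and let P ∈ ∂Ω satisfy the interior ball condition: there exists an open ball B ⊆ Ω with P ∈ ∂B. Let φ : ℝ² → ℝ be continuously differentiable on an open neighborhood of P and twice continuously differentiable on Ω, with Δφ(x) + λ·φ(x) = 0 for all x ∈ Ω and φ(P) = 0. If P does not belong to the closure of {x ∈ Ω : φ(x) = 0}, then fderiv φ P ≠ 0. -/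
set_option maxHeartbeats 1000000

/-- Partial derivative in the first coordinate direction. -/
noncomputable def pd1 (f : ℝ × ℝ → ℝ) (p : ℝ × ℝ) : ℝ := fderiv ℝ f p (1, 0)

/-- Partial derivative in the second coordinate direction. -/
noncomputable def pd2 (f : ℝ × ℝ → ℝ) (p : ℝ × ℝ) : ℝ := fderiv ℝ f p (0, 1)

/-- The Laplacian `Δφ = ∂²φ/∂x² + ∂²φ/∂y²`. -/
noncomputable def lap (f : ℝ × ℝ → ℝ) (p : ℝ × ℝ) : ℝ :=
  pd1 (pd1 f) p + pd2 (pd2 f) p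

/-- `P` satisfies the interior ball condition for `Ω`: there is an open (Euclidean)
ball contained in `Ω` whose boundary contains `P`. -/
def InteriorBall (Ω : Set (ℝ × ℝ)) (P : ℝ × ℝ) : Prop :=
  ∃ (c : ℝ × ℝ) (ρ : ℝ), 0 < ρ ∧
    {x : ℝ × ℝ | (x.1 - c.1) ^ 2 + (x.2 - c.2) ^ 2 < ρ ^ 2} ⊆ Ω ∧
    (P.1 - c.1) ^ 2 + (P.2 - c.2) ^ 2 = ρ ^ 2

open Real Filter Set

lemma eball_convex (c : ℝ × ℝ) (r : ℝ) :
    Convex ℝ {x : ℝ × ℝ | (x.1 - c.1)^2 + (x.2 - c.2)^2 < r} := by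
  intro x hx y hy s t hs ht hst
  simp only [Set.mem_setOf_eq, Prod.fst_add, Prod.snd_add, Prod.smul_fst, Prod.smul_snd,
    smul_eq_mul] at *
  rcases eq_or_lt_of_le hs with h | h
  · have hts : t = 1 := by linarith
    rw [← h, hts]
    simpa using hy
  · have hts : t = 1 - s := by linarith
    subst hts
    nlinarith [mul_nonneg (mul_nonneg hs ht) (sq_nonneg (x.1 - y.1)),
      mul_nonneg (mul_nonneg hs ht) (sq_nonneg (x.2 - y.2)),
      mul_pos h (sub_pos.mpr hx), mul_nonneg ht (le_of_lt (sub_pos.mpr hy))]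

lemma lap_neg (f : ℝ × ℝ → ℝ) (p : ℝ × ℝ) : lap (fun x => -f x) p = - lap f p := by
  have h1 : pd1 (fun x => -f x) = fun y => -pd1 f y := by
    funext y; rw [pd1, pd1, fderiv_fun_neg]; simp
  have h2 : pd2 (fun x => -f x) = fun y => -pd2 f y := by
    funext y; rw [pd2, pd2, fderiv_fun_neg]; simp
  rw [lap, lap, h1, h2, pd1, pd2, pd1, pd2, fderiv_fun_neg, fderiv_fun_neg]
  simp; ring

noncomputable def bw (a b α : ℝ) (p : ℝ × ℝ) : ℝ :=
  Real.exp ((-α) * ((p.1 - a) * (p.1 - a) + (p.2 - b) * (p.2 - b)))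

lemma bw_continuous (a b α : ℝ) : Continuous (bw a b α) := by
  unfold bw; fun_prop


lemma bw_hasFDerivAt (a b α : ℝ) (p : ℝ × ℝ) :
    HasFDerivAt (bw a b α)
      (bw a b α p • ((-α) • (((p.1 - a) • ContinuousLinearMap.fst ℝ ℝ ℝ +
        (p.1 - a) • ContinuousLinearMap.fst ℝ ℝ ℝ) +
        ((p.2 - b) • ContinuousLinearMap.snd ℝ ℝ ℝ +
        (p.2 - b) • ContinuousLinearMap.snd ℝ ℝ ℝ)))) p := by
  have h1 : HasFDerivAt (fun x : ℝ × ℝ => x.1 - a) (ContinuousLinearMap.fst ℝ ℝ ℝ) p :=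
    (hasFDerivAt_fst).sub_const a
  have h2 : HasFDerivAt (fun x : ℝ × ℝ => x.2 - b) (ContinuousLinearMap.snd ℝ ℝ ℝ) p :=
    (hasFDerivAt_snd).sub_const b
  exact (((h1.mul h1).add (h2.mul h2)).const_mul (-α)).exp

lemma bw_fderiv_apply (a b α : ℝ) (p v : ℝ × ℝ) :
    fderiv ℝ (bw a b α) p v
      = bw a b α p * ((-α) * (2 * (p.1 - a) * v.1 + 2 * (p.2 - b) * v.2)) := by
  rw [(bw_hasFDerivAt a b α p).fderiv]
  simp [ContinuousLinearMap.smul_apply, ContinuousLinearMap.add_apply, smul_eq_mul]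
  ring


lemma pd1_bw (a b α : ℝ) :
    pd1 (bw a b α) = fun p => (-(2 * α) * (p.1 - a)) * bw a b α p := by
  funext p
  rw [pd1, bw_fderiv_apply]
  simp; ring

lemma pd2_bw (a b α : ℝ) :
    pd2 (bw a b α) = fun p => (-(2 * α) * (p.2 - b)) * bw a b α p := by
  funext p
  rw [pd2, bw_fderiv_apply]
  simp; ring

lemma pd1bw_hasFDerivAt (a b α : ℝ) (p : ℝ × ℝ) :
    HasFDerivAt (pd1 (bw a b α))
      ((-(2 * α) * (p.1 - a)) • (bw a b α p • ((-α) • (((p.1 - a) • ContinuousLinearMap.fst ℝ ℝ ℝ +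
        (p.1 - a) • ContinuousLinearMap.fst ℝ ℝ ℝ) +
        ((p.2 - b) • ContinuousLinearMap.snd ℝ ℝ ℝ +
        (p.2 - b) • ContinuousLinearMap.snd ℝ ℝ ℝ)))) +
        bw a b α p • ((-(2 * α)) • ContinuousLinearMap.fst ℝ ℝ ℝ)) p := by
  rw [pd1_bw]
  have h1 : HasFDerivAt (fun x : ℝ × ℝ => -(2 * α) * (x.1 - a))
      ((-(2 * α)) • ContinuousLinearMap.fst ℝ ℝ ℝ) p :=
    ((hasFDerivAt_fst).sub_const a).const_mul _
  exact h1.mul (bw_hasFDerivAt a b α p)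

lemma pd2bw_hasFDerivAt (a b α : ℝ) (p : ℝ × ℝ) :
    HasFDerivAt (pd2 (bw a b α))
      ((-(2 * α) * (p.2 - b)) • (bw a b α p • ((-α) • (((p.1 - a) • ContinuousLinearMap.fst ℝ ℝ ℝ +
        (p.1 - a) • ContinuousLinearMap.fst ℝ ℝ ℝ) +
        ((p.2 - b) • ContinuousLinearMap.snd ℝ ℝ ℝ +
        (p.2 - b) • ContinuousLinearMap.snd ℝ ℝ ℝ)))) +
        bw a b α p • ((-(2 * α)) • ContinuousLinearMap.snd ℝ ℝ ℝ)) p := by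
  rw [pd2_bw]
  have h1 : HasFDerivAt (fun x : ℝ × ℝ => -(2 * α) * (x.2 - b))
      ((-(2 * α)) • ContinuousLinearMap.snd ℝ ℝ ℝ) p :=
    ((hasFDerivAt_snd).sub_const b).const_mul _
  exact h1.mul (bw_hasFDerivAt a b α p)

lemma pd1_pd1_bw (a b α : ℝ) (p : ℝ × ℝ) :
    pd1 (pd1 (bw a b α)) p = bw a b α p * (4 * α^2 * (p.1 - a)^2 - 2 * α) := by
  rw [pd1, (pd1bw_hasFDerivAt a b α p).fderiv]
  simp [ContinuousLinearMap.smul_apply, ContinuousLinearMap.add_apply, smul_eq_mul]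
  ring

lemma pd2_pd2_bw (a b α : ℝ) (p : ℝ × ℝ) :
    pd2 (pd2 (bw a b α)) p = bw a b α p * (4 * α^2 * (p.2 - b)^2 - 2 * α) := by
  rw [pd2, (pd2bw_hasFDerivAt a b α p).fderiv]
  simp [ContinuousLinearMap.smul_apply, ContinuousLinearMap.add_apply, smul_eq_mul]
  ring

lemma hfac_aux (α r2 q : ℝ) (hα : 0 < α) (h8 : α * r2 = 8) (h1 : r2/4 < q) :
    0 < 4 * α^2 * q - 4 * α := by
  nlinarith [mul_pos (mul_pos hα hα) (sub_pos.mpr h1), h8, hα]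

lemma second_deriv_nonneg {f g : ℝ → ℝ} {m : ℝ}
    (hf : ∀ᶠ t in nhds (0:ℝ), HasDerivAt f (g t) t)
    (hg : HasDerivAt g m 0)
    (hmin : IsLocalMin f 0) : 0 ≤ m := by
  by_contra hc
  push_neg at hc
  have hg0 : g 0 = 0 := hmin.hasDerivAt_eq_zero hf.self_of_nhds
  have hs := hasDerivAt_iff_tendsto_slope.mp hg
  have hlt : m < m / 2 := by linarith
  have hev : ∀ᶠ t in nhdsWithin (0:ℝ) {(0:ℝ)}ᶜ, slope g 0 t < m / 2 :=
    hs.eventually (Iio_mem_nhds hlt)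
  have hgneg : ∀ᶠ t in nhdsWithin (0:ℝ) (Set.Ioi 0), g t < 0 := by
    have hmono : nhdsWithin (0:ℝ) (Set.Ioi 0) ≤ nhdsWithin (0:ℝ) {(0:ℝ)}ᶜ :=
      nhdsWithin_mono _ (fun x hx => ne_of_gt hx)
    filter_upwards [hev.filter_mono hmono, self_mem_nhdsWithin] with t ht hpos
    have hsl : slope g 0 t = g t / t := by simp [slope_def_field, hg0]
    rw [hsl] at ht
    have h2 := (div_lt_iff₀ hpos).mp ht
    nlinarith [mul_neg_of_neg_of_pos (show m/2 < 0 by linarith) hpos]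
  have hall : ∀ᶠ t in nhdsWithin (0:ℝ) (Set.Ioi 0),
      g t < 0 ∧ HasDerivAt f (g t) t ∧ f 0 ≤ f t := by
    filter_upwards [hgneg, (hf.and hmin).filter_mono nhdsWithin_le_nhds] with t h1 h2
    exact ⟨h1, h2.1, h2.2⟩
  rw [eventually_nhdsWithin_iff] at hall
  rw [Metric.eventually_nhds_iff] at hall
  obtain ⟨η, hη0, hη⟩ := hall
  set t₀ := η / 2 with ht₀
  have ht₀pos : 0 < t₀ := by positivity
  have hmem : ∀ t ∈ Set.Ioc (0:ℝ) t₀, g t < 0 ∧ HasDerivAt f (g t) t ∧ f 0 ≤ f t := by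
    intro t ht
    refine hη ?_ ht.1
    rw [Real.dist_eq, sub_zero, abs_of_pos ht.1]
    linarith [ht.2]
  have hanti : StrictAntiOn f (Set.Icc 0 t₀) := by
    apply strictAntiOn_of_deriv_neg (convex_Icc 0 t₀)
    · intro t ht
      rcases eq_or_lt_of_le ht.1 with h | h
      · rw [← h]
        exact hf.self_of_nhds.differentiableAt.continuousAt.continuousWithinAt
      · exact ((hmem t ⟨h, ht.2⟩).2.1.differentiableAt.continuousAt).continuousWithinAt
    · intro t ht
      rw [interior_Icc] at ht
      rw [(hmem t ⟨ht.1, le_of_lt ht.2⟩).2.1.deriv]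
      exact (hmem t ⟨ht.1, le_of_lt ht.2⟩).1
  have h1 : f t₀ < f 0 := hanti ⟨le_refl 0, le_of_lt ht₀pos⟩ ⟨le_of_lt ht₀pos, le_refl t₀⟩ ht₀pos
  have h2 : f 0 ≤ f t₀ := (hmem t₀ ⟨ht₀pos, le_refl t₀⟩).2.2
  linarith

lemma right_deriv_nonneg {f : ℝ → ℝ} {d : ℝ} (hf : HasDerivAt f d 0) (h0 : f 0 = 0)
    (hnn : ∀ᶠ t in nhdsWithin (0:ℝ) (Set.Ioi 0), 0 ≤ f t) : 0 ≤ d := by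
  have hs := hasDerivAt_iff_tendsto_slope.mp hf
  have hmono : nhdsWithin (0:ℝ) (Set.Ioi 0) ≤ nhdsWithin (0:ℝ) {(0:ℝ)}ᶜ :=
    nhdsWithin_mono _ (fun x hx => ne_of_gt hx)
  have hs' : Tendsto (slope f 0) (nhdsWithin (0:ℝ) (Set.Ioi 0)) (nhds d) := hs.mono_left hmono
  refine ge_of_tendsto hs' ?_
  filter_upwards [hnn, self_mem_nhdsWithin] with t ht hpos
  have : slope f 0 t = f t / t := by simp [slope_def_field, h0]
  rw [this]
  exact div_nonneg ht (le_of_lt hpos)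

lemma key_hopf (c P : ℝ × ℝ) (ρ ε lam : ℝ) (hρ : 0 < ρ) (hε : 0 < ε) (hlam : 0 ≤ lam)
    (hPc : (P.1 - c.1)^2 + (P.2 - c.2)^2 = ρ^2)
    (φ : ℝ × ℝ → ℝ) (V : Set (ℝ × ℝ)) (hV : IsOpen V) (hPV : P ∈ V)
    (hφ1 : ContDiffOn ℝ 1 φ V)
    (hφ2 : ContDiffOn ℝ 2 φ {x : ℝ × ℝ | (x.1 - c.1)^2 + (x.2 - c.2)^2 < ρ^2})
    (heq : ∀ x : ℝ × ℝ, (x.1 - c.1)^2 + (x.2 - c.2)^2 < ρ^2 → lap φ x + lam * φ x = 0)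
    (hφP : φ P = 0)
    (hpos : ∀ x : ℝ × ℝ, (x.1 - c.1)^2 + (x.2 - c.2)^2 < ρ^2 →
      (x.1 - P.1)^2 + (x.2 - P.2)^2 < ε^2 → 0 < φ x) :
    fderiv ℝ φ P ≠ 0 := by
  -- parameters
  set τ : ℝ := min (1/2) (ε/(4*ρ)) with hτdef
  have hτpos : 0 < τ := lt_min (by norm_num) (by positivity)
  have hτhalf : τ ≤ 1/2 := min_le_left _ _
  have hτρε : τ * ρ ≤ ε / 4 := by
    have := min_le_right (1/2) (ε/(4*ρ))
    calc τ * ρ ≤ (ε/(4*ρ)) * ρ := by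
          apply mul_le_mul_of_nonneg_right _ (le_of_lt hρ)
          exact min_le_right _ _
      _ = ε / 4 := by field_simp
  set a : ℝ := P.1 - τ * (P.1 - c.1) with hadef
  set b : ℝ := P.2 - τ * (P.2 - c.2) with hbdef
  set r2 : ℝ := τ^2 * ρ^2 with hr2def
  have hr2pos : 0 < r2 := by positivity
  set α : ℝ := 8 / r2 with hαdef
  have hαpos : 0 < α := by positivity
  set Q : (ℝ × ℝ) → ℝ := fun x => (x.1 - a) * (x.1 - a) + (x.2 - b) * (x.2 - b) with hQdef
  have hQcont : Continuous Q := by fun_prop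
  have hQP : Q P = r2 := by
    simp only [hQdef, hadef, hbdef, hr2def]
    linear_combination τ^2 * hPc
  -- every point of the small closed ball different from P is in the big open ball
  have hinB : ∀ x : ℝ × ℝ, Q x ≤ r2 → x ≠ P →
      (x.1 - c.1)^2 + (x.2 - c.2)^2 < ρ^2 := by
    intro x hxQ hxP
    have hx : (x.1 - a) * (x.1 - a) + (x.2 - b) * (x.2 - b) ≤ τ^2 * ρ^2 := by
      simpa [hQdef, hr2def] using hxQ
    have hne : (x.1 - a - τ * (P.1 - c.1))^2 + (x.2 - b - τ * (P.2 - c.2))^2 > 0 := by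
      have h1 : x.1 - a - τ * (P.1 - c.1) = x.1 - P.1 := by rw [hadef]; ring
      have h2 : x.2 - b - τ * (P.2 - c.2) = x.2 - P.2 := by rw [hbdef]; ring
      rw [h1, h2]
      have hor : x.1 ≠ P.1 ∨ x.2 ≠ P.2 := by
        by_contra h
        push_neg at h
        exact hxP (Prod.ext_iff.mpr ⟨h.1, h.2⟩)
      rcases hor with h | h
      · have h0 : x.1 - P.1 ≠ 0 := sub_ne_zero.mpr h
        nlinarith [sq_nonneg (x.2 - P.2), (by positivity : 0 < (x.1 - P.1)^2)]
      · have h0 : x.2 - P.2 ≠ 0 := sub_ne_zero.mpr h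
        nlinarith [sq_nonneg (x.1 - P.1), (by positivity : 0 < (x.2 - P.2)^2)]
    have key : (x.1 - a + (1 - τ) * (P.1 - c.1))^2 + (x.2 - b + (1 - τ) * (P.2 - c.2))^2 < ρ^2 := by
      nlinarith [mul_pos (show (0:ℝ) < 1 - τ by linarith) hne, hx]
    have h1 : x.1 - a + (1 - τ) * (P.1 - c.1) = x.1 - c.1 := by rw [hadef]; ring
    have h2 : x.2 - b + (1 - τ) * (P.2 - c.2) = x.2 - c.2 := by rw [hbdef]; ring
    rwa [h1, h2] at key
  -- every point of the small closed ball is ε-close to P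
  have hnear : ∀ x : ℝ × ℝ, Q x ≤ r2 → (x.1 - P.1)^2 + (x.2 - P.2)^2 < ε^2 := by
    intro x hxQ
    have hx : (x.1 - a) * (x.1 - a) + (x.2 - b) * (x.2 - b) ≤ τ^2 * ρ^2 := by
      simpa [hQdef, hr2def] using hxQ
    have h4 : (τ*ρ)^2 ≤ (ε/4)^2 := by
      apply pow_le_pow_left₀ (by positivity) hτρε
    have hPcτ : τ^2*((P.1 - c.1)^2+(P.2 - c.2)^2) = τ^2*ρ^2 := by rw [hPc]
    have h1 : x.1 - P.1 = (x.1 - a) - τ * (P.1 - c.1) := by rw [hadef]; ring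
    have h2 : x.2 - P.2 = (x.2 - b) - τ * (P.2 - c.2) := by rw [hbdef]; ring
    rw [h1, h2]
    nlinarith [sq_nonneg ((x.1 - a) + τ * (P.1 - c.1)), sq_nonneg ((x.2 - b) + τ * (P.2 - c.2)),
      hε, hPcτ, hx]
  have hBopen : IsOpen {x : ℝ × ℝ | (x.1 - c.1)^2 + (x.2 - c.2)^2 < ρ^2} := by
    have hco : Continuous fun x : ℝ × ℝ => (x.1 - c.1)^2 + (x.2 - c.2)^2 := by fun_prop
    exact isOpen_lt hco continuous_const
  set K : Set (ℝ × ℝ) := Q ⁻¹' (Icc (r2/4) r2) with hKdef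
  set A : Set (ℝ × ℝ) := Q ⁻¹' (Ioo (r2/4) r2) with hAdef
  have hAopen : IsOpen A := isOpen_Ioo.preimage hQcont
  have hKcl : IsClosed K := isClosed_Icc.preimage hQcont
  have hKbd : Bornology.IsBounded K := by
    apply (Bornology.IsBounded.subset (Metric.isBounded_closedBall (x := ((a,b) : ℝ × ℝ)) (r := τ*ρ)))
    intro x hx
    have hx2 : Q x ≤ r2 := (Set.mem_preimage.mp hx).2
    simp only [hQdef, hr2def] at hx2
    rw [Metric.mem_closedBall, Prod.dist_eq]
    have hb1 : dist x.1 (a,b).1 ≤ τ*ρ := by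
      rw [Real.dist_eq]
      have h1 : (x.1 - a)^2 ≤ (τ*ρ)^2 := by nlinarith [sq_nonneg (x.2 - b)]
      have := Real.sqrt_le_sqrt h1
      rwa [Real.sqrt_sq_eq_abs, Real.sqrt_sq (by positivity)] at this
    have hb2 : dist x.2 (a,b).2 ≤ τ*ρ := by
      rw [Real.dist_eq]
      have h1 : (x.2 - b)^2 ≤ (τ*ρ)^2 := by nlinarith [sq_nonneg (x.1 - a)]
      have := Real.sqrt_le_sqrt h1
      rwa [Real.sqrt_sq_eq_abs, Real.sqrt_sq (by positivity)] at this
    exact max_le hb1 hb2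
  have hKcomp : IsCompact K := Metric.isCompact_of_isClosed_isBounded hKcl hKbd
  have hKP : P ∈ K := by
    simp only [hKdef, Set.mem_preimage, Set.mem_Icc, hQP]
    constructor <;> linarith
  -- φ is positive on K away from P
  have hφposK : ∀ x ∈ K, x ≠ P → 0 < φ x := by
    intro x hx hxP
    have hx2 : Q x ≤ r2 := (Set.mem_preimage.mp hx).2
    exact hpos x (hinB x hx2 hxP) (hnear x hx2)
  -- φ is continuous on K
  have hφcontK : ContinuousOn φ K := by
    intro x hx
    by_cases hxP : x = P
    · subst hxP
      exact ((hφ1.contDiffAt (hV.mem_nhds hPV)).continuousAt).continuousWithinAt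
    · have hx2 : Q x ≤ r2 := (Set.mem_preimage.mp hx).2
      exact ((hφ2.contDiffAt (hBopen.mem_nhds (hinB x hx2 hxP))).continuousAt).continuousWithinAt
  -- the inner sphere
  set S : Set (ℝ × ℝ) := Q ⁻¹' {r2/4} with hSdef
  have hSsub : S ⊆ K := by
    intro x hx
    simp only [hSdef, Set.mem_preimage, Set.mem_singleton_iff] at hx
    simp only [hKdef, Set.mem_preimage, Set.mem_Icc, hx]
    constructor <;> linarith
  have hScomp : IsCompact S :=
    hKcomp.of_isClosed_subset (isClosed_singleton.preimage hQcont) hSsub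
  have hxinS : ((a + τ*ρ/2, b) : ℝ × ℝ) ∈ S := by
    have hQx : Q ((a + τ*ρ/2, b) : ℝ × ℝ) = r2/4 := by
      show (a + τ*ρ/2 - a) * (a + τ*ρ/2 - a) + (b - b) * (b - b) = r2/4
      rw [hr2def]; ring
    simp only [hSdef, Set.mem_preimage, Set.mem_singleton_iff, hQx]
  obtain ⟨xm, hxmS, hxmmin⟩ := hScomp.exists_isMinOn ⟨_, hxinS⟩ (hφcontK.mono hSsub)
  set m : ℝ := φ xm with hmdef
  have hQxm : Q xm = r2/4 := by
    have := hxmS; simpa only [hSdef, Set.mem_preimage, Set.mem_singleton_iff] using this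
  have hxmP : xm ≠ P := by
    intro h; rw [h, hQP] at hQxm; linarith
  have hm : 0 < m := hφposK xm (hSsub hxmS) hxmP
  set Mout : ℝ := rexp (-α * r2) with hMoutdef
  set Min' : ℝ := rexp (-α * (r2/4)) with hMindef
  have hM : 0 < Min' - Mout := by
    rw [hMindef, hMoutdef]
    have : -α * r2 < -α * (r2/4) := by nlinarith
    linarith [Real.exp_lt_exp.mpr this]
  set δ : ℝ := m / (Min' - Mout) with hδdef
  have hδ : 0 < δ := div_pos hm hM
  set v : (ℝ × ℝ) → ℝ := fun x => φ x - δ * bw a b α x + δ * Mout with hvdef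
  have hbwval : ∀ x : ℝ × ℝ, bw a b α x = rexp (-α * Q x) := by
    intro x; simp only [bw, hQdef]
  have hvP : v P = 0 := by
    simp only [hvdef, hbwval P, hQP, hMoutdef, hφP]
    ring
  -- nonnegativity of v on K
  have hv0 : ∀ x ∈ K, 0 ≤ v x := by
    have hKne : K.Nonempty := ⟨P, hKP⟩
    have hvcont : ContinuousOn v K := by
      apply ContinuousOn.add
      apply ContinuousOn.sub hφcontK
      · exact (continuous_const.mul (bw_continuous a b α)).continuousOn
      · exact continuousOn_const
    obtain ⟨x₀, hx₀K, hx₀min⟩ := hKcomp.exists_isMinOn hKne hvcont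
    intro x hx
    refine le_trans ?_ (hx₀min hx)
    by_cases hA : x₀ ∈ A
    · exfalso
      have hx₀A : Q x₀ ∈ Ioo (r2/4) r2 := Set.mem_preimage.mp hA
      have hx₀P : x₀ ≠ P := by
        intro h; rw [h, hQP] at hx₀A; exact absurd hx₀A.2 (lt_irrefl r2)
      have hx₀B : (x₀.1 - c.1)^2 + (x₀.2 - c.2)^2 < ρ^2 := hinB x₀ (le_of_lt hx₀A.2) hx₀P
      have hφx₀ : 0 < φ x₀ := hφposK x₀ hx₀K hx₀P
      have hx₀B' : x₀ ∈ {x : ℝ × ℝ | (x.1 - c.1)^2 + (x.2 - c.2)^2 < ρ^2} := hx₀B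
      have hBnhds : {x : ℝ × ℝ | (x.1 - c.1)^2 + (x.2 - c.2)^2 < ρ^2} ∈ nhds x₀ :=
        hBopen.mem_nhds hx₀B'
      -- regularity of pd1 φ and pd2 φ
      have hfd : ContDiffOn ℝ 1 (fderiv ℝ φ) {x : ℝ × ℝ | (x.1 - c.1)^2 + (x.2 - c.2)^2 < ρ^2} :=
        hφ2.fderiv_of_isOpen hBopen (by norm_num)
      have hpd1C : ContDiffOn ℝ 1 (pd1 φ) {x : ℝ × ℝ | (x.1 - c.1)^2 + (x.2 - c.2)^2 < ρ^2} := by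
        have hclm : ContDiff ℝ 1 (fun L : (ℝ × ℝ) →L[ℝ] ℝ => L ((1:ℝ),(0:ℝ))) :=
          (ContinuousLinearMap.apply ℝ ℝ (((1:ℝ),(0:ℝ)) : ℝ × ℝ)).contDiff
        exact hclm.comp_contDiffOn hfd
      have hpd2C : ContDiffOn ℝ 1 (pd2 φ) {x : ℝ × ℝ | (x.1 - c.1)^2 + (x.2 - c.2)^2 < ρ^2} := by
        have hclm : ContDiff ℝ 1 (fun L : (ℝ × ℝ) →L[ℝ] ℝ => L ((0:ℝ),(1:ℝ))) :=
          (ContinuousLinearMap.apply ℝ ℝ (((0:ℝ),(1:ℝ)) : ℝ × ℝ)).contDiff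
        exact hclm.comp_contDiffOn hfd
      have hd1x₀ : DifferentiableAt ℝ (pd1 φ) x₀ :=
        (hpd1C.contDiffAt hBnhds).differentiableAt one_ne_zero
      have hd2x₀ : DifferentiableAt ℝ (pd2 φ) x₀ :=
        (hpd2C.contDiffAt hBnhds).differentiableAt one_ne_zero
      have hφdiffB : ∀ y : ℝ × ℝ, (y.1 - c.1)^2 + (y.2 - c.2)^2 < ρ^2 → DifferentiableAt ℝ φ y :=
        fun y hy => (hφ2.contDiffAt (hBopen.mem_nhds hy)).differentiableAt (by norm_num)
      have hvdiffB : ∀ y : ℝ × ℝ, (y.1 - c.1)^2 + (y.2 - c.2)^2 < ρ^2 →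
          HasFDerivAt v (fderiv ℝ φ y - δ • fderiv ℝ (bw a b α) y) y := fun y hy =>
        (((hφdiffB y hy).hasFDerivAt.sub
          (((bw_hasFDerivAt a b α y).differentiableAt.hasFDerivAt).const_mul δ)).add_const _)
      have hpd1v : ∀ y : ℝ × ℝ, (y.1 - c.1)^2 + (y.2 - c.2)^2 < ρ^2 →
          pd1 v y = pd1 φ y - δ * pd1 (bw a b α) y := by
        intro y hy
        rw [pd1, (hvdiffB y hy).fderiv]
        simp [ContinuousLinearMap.sub_apply, ContinuousLinearMap.smul_apply, smul_eq_mul,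
          pd1]
      have hpd2v : ∀ y : ℝ × ℝ, (y.1 - c.1)^2 + (y.2 - c.2)^2 < ρ^2 →
          pd2 v y = pd2 φ y - δ * pd2 (bw a b α) y := by
        intro y hy
        rw [pd2, (hvdiffB y hy).fderiv]
        simp [ContinuousLinearMap.sub_apply, ContinuousLinearMap.smul_apply, smul_eq_mul,
          pd2]
      have hvev1 : pd1 v =ᶠ[nhds x₀] fun y => pd1 φ y - δ * pd1 (bw a b α) y :=
        Filter.eventually_of_mem hBnhds (fun y hy => hpd1v y hy)
      have hvev2 : pd2 v =ᶠ[nhds x₀] fun y => pd2 φ y - δ * pd2 (bw a b α) y :=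
        Filter.eventually_of_mem hBnhds (fun y hy => hpd2v y hy)
      have hbw1d : DifferentiableAt ℝ (pd1 (bw a b α)) x₀ :=
        (pd1bw_hasFDerivAt a b α x₀).differentiableAt
      have hbw2d : DifferentiableAt ℝ (pd2 (bw a b α)) x₀ :=
        (pd2bw_hasFDerivAt a b α x₀).differentiableAt
      have hχ₁diff : DifferentiableAt ℝ (fun y => pd1 φ y - δ * pd1 (bw a b α) y) x₀ :=
        hd1x₀.sub (hbw1d.const_mul δ)
      have hχ₂diff : DifferentiableAt ℝ (fun y => pd2 φ y - δ * pd2 (bw a b α) y) x₀ :=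
        hd2x₀.sub (hbw2d.const_mul δ)
      have hd_pd1v : DifferentiableAt ℝ (pd1 v) x₀ :=
        (hvev1.differentiableAt_iff).mpr hχ₁diff
      have hd_pd2v : DifferentiableAt ℝ (pd2 v) x₀ :=
        (hvev2.differentiableAt_iff).mpr hχ₂diff
      have hpp1 : pd1 (pd1 v) x₀ = pd1 (pd1 φ) x₀ - δ * pd1 (pd1 (bw a b α)) x₀ := by
        show fderiv ℝ (pd1 v) x₀ (1,0) = _
        rw [hvev1.fderiv_eq, fderiv_fun_sub hd1x₀ (hbw1d.const_mul δ), fderiv_const_mul hbw1d δ]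
        simp [ContinuousLinearMap.sub_apply, ContinuousLinearMap.smul_apply, smul_eq_mul, pd1]
      have hpp2 : pd2 (pd2 v) x₀ = pd2 (pd2 φ) x₀ - δ * pd2 (pd2 (bw a b α)) x₀ := by
        show fderiv ℝ (pd2 v) x₀ (0,1) = _
        rw [hvev2.fderiv_eq, fderiv_fun_sub hd2x₀ (hbw2d.const_mul δ), fderiv_const_mul hbw2d δ]
        simp [ContinuousLinearMap.sub_apply, ContinuousLinearMap.smul_apply, smul_eq_mul, pd2]
      -- local minimum
      have hAK : A ⊆ K := by
        intro y hy
        have := Set.mem_preimage.mp hy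
        exact Set.mem_preimage.mpr ⟨le_of_lt this.1, le_of_lt this.2⟩
      have hminloc : IsLocalMin v x₀ :=
        hx₀min.isLocalMin (Filter.mem_of_superset (hAopen.mem_nhds hA) hAK)
      -- second directional derivatives are nonnegative
      have hdirmin : ∀ e : ℝ × ℝ, 0 ≤ fderiv ℝ (pd1 v) x₀ e → True := fun _ _ => trivial
      have hline : ∀ (e : ℝ × ℝ) (t : ℝ), HasDerivAt (fun s : ℝ => x₀ + s • e) e t := by
        intro e t
        simpa using ((hasDerivAt_id t).smul_const e).const_add x₀
      have h0' : ∀ e : ℝ × ℝ, x₀ + (0:ℝ) • e = x₀ := by intro e; simp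
      have htd : ∀ e : ℝ × ℝ, Tendsto (fun s : ℝ => x₀ + s • e) (nhds 0) (nhds x₀) := by
        intro e
        have hcl : Continuous (fun s : ℝ => x₀ + s • e) := by fun_prop
        have := hcl.continuousAt (x := (0:ℝ))
        rwa [ContinuousAt, h0' e] at this
      have hminline : ∀ e : ℝ × ℝ, IsLocalMin (fun t : ℝ => v (x₀ + t • e)) 0 := by
        intro e
        have hev := (htd e).eventually hminloc
        simpa [IsLocalMin, IsMinFilter, h0' e] using hev
      have hfg : ∀ e : ℝ × ℝ, ∀ᶠ t in nhds (0:ℝ),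
          HasDerivAt (fun s : ℝ => v (x₀ + s • e)) (fderiv ℝ v (x₀ + t • e) e) t := by
        intro e
        have hBev : ∀ᶠ y in nhds x₀, (y.1 - c.1)^2 + (y.2 - c.2)^2 < ρ^2 :=
          Filter.eventually_of_mem hBnhds (fun y hy => hy)
        filter_upwards [(htd e).eventually hBev] with t htB
        have hvd' : HasFDerivAt v (fderiv ℝ v (x₀ + t • e)) (x₀ + t • e) :=
          (hvdiffB _ htB).differentiableAt.hasFDerivAt
        exact hvd'.comp_hasDerivAt t (hline e t)
      have hsec1 : 0 ≤ pd1 (pd1 v) x₀ := by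
        refine second_deriv_nonneg (hfg ((1:ℝ),(0:ℝ))) ?_ (hminline ((1:ℝ),(0:ℝ)))
        have hfd1 : HasFDerivAt (pd1 v) (fderiv ℝ (pd1 v) x₀) (x₀ + (0:ℝ) • (((1:ℝ),(0:ℝ)) : ℝ × ℝ)) := by
          rw [h0']; exact hd_pd1v.hasFDerivAt
        exact hfd1.comp_hasDerivAt 0 (hline _ 0)
      have hsec2 : 0 ≤ pd2 (pd2 v) x₀ := by
        refine second_deriv_nonneg (hfg ((0:ℝ),(1:ℝ))) ?_ (hminline ((0:ℝ),(1:ℝ)))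
        have hfd2 : HasFDerivAt (pd2 v) (fderiv ℝ (pd2 v) x₀) (x₀ + (0:ℝ) • (((0:ℝ),(1:ℝ)) : ℝ × ℝ)) := by
          rw [h0']; exact hd_pd2v.hasFDerivAt
        exact hfd2.comp_hasDerivAt 0 (hline _ 0)
      -- compute and contradict
      have hlapφ : lap φ x₀ = -(lam * φ x₀) := by
        have := heq x₀ hx₀B; linarith only [this]
      have hq2 : (x₀.1 - a)^2 + (x₀.2 - b)^2 = Q x₀ := by
        simp only [hQdef]; ring
      have hαr2 : α * r2 = 8 := by
        rw [hαdef]; field_simp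
      have hfac : 0 < 4 * α^2 * ((x₀.1 - a)^2 + (x₀.2 - b)^2) - 4 * α := by
        have h1 : r2/4 < (x₀.1 - a)^2 + (x₀.2 - b)^2 := by rw [hq2]; exact hx₀A.1
        exact hfac_aux α r2 _ hαpos hαr2 h1
      have hbwpos : 0 < bw a b α x₀ := Real.exp_pos _
      have hlapbw : 0 < pd1 (pd1 (bw a b α)) x₀ + pd2 (pd2 (bw a b α)) x₀ := by
        rw [pd1_pd1_bw, pd2_pd2_bw]
        have : bw a b α x₀ * (4 * α^2 * (x₀.1 - a)^2 - 2 * α)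
            + bw a b α x₀ * (4 * α^2 * (x₀.2 - b)^2 - 2 * α)
            = bw a b α x₀ * (4 * α^2 * ((x₀.1 - a)^2 + (x₀.2 - b)^2) - 4 * α) := by ring
        rw [this]
        exact mul_pos hbwpos hfac
      have hlap : lap φ x₀ = pd1 (pd1 φ) x₀ + pd2 (pd2 φ) x₀ := rfl
      have h3 : 0 ≤ lam * φ x₀ := mul_nonneg hlam (le_of_lt hφx₀)
      have hdelta : 0 < δ * (pd1 (pd1 (bw a b α)) x₀ + pd2 (pd2 (bw a b α)) x₀) :=
        mul_pos hδ hlapbw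
      have hsum : 0 ≤ pd1 (pd1 v) x₀ + pd2 (pd2 v) x₀ := add_nonneg hsec1 hsec2
      rw [hpp1, hpp2] at hsum
      rw [hlap] at hlapφ
      linarith only [hsum, hlapφ, h3, hdelta]
    · have hx₀2 : Q x₀ ∈ Icc (r2/4) r2 := Set.mem_preimage.mp hx₀K
      have hcases : Q x₀ = r2/4 ∨ Q x₀ = r2 := by
        simp only [hAdef, Set.mem_preimage, Set.mem_Ioo] at hA
        rcases hx₀2 with ⟨hl, hr⟩
        rcases eq_or_lt_of_le hl with h | h
        · exact Or.inl h.symm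
        · rcases eq_or_lt_of_le hr with h' | h'
          · exact Or.inr h'
          · exact absurd ⟨h, h'⟩ hA
      rcases hcases with h | h
      · -- inner sphere
        have hx₀S : x₀ ∈ S := by
          simp only [hSdef, Set.mem_preimage, Set.mem_singleton_iff, h]
        have hφm : m ≤ φ x₀ := hxmmin hx₀S
        have hbw : bw a b α x₀ = Min' := by rw [hbwval, h, hMindef]
        have hδM : δ * (Min' - Mout) = m := div_mul_cancel₀ m (ne_of_gt hM)
        simp only [hvdef, hbw]
        nlinarith
      · -- outer sphere
        have hbw : bw a b α x₀ = Mout := by rw [hbwval, h, hMoutdef]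
        by_cases hx₀P : x₀ = P
        · rw [hx₀P, hvP]
        · have := hφposK x₀ hx₀K hx₀P
          simp only [hvdef, hbw]
          nlinarith
  -- the final derivative estimate
  set u : ℝ × ℝ := (a - P.1, b - P.2) with hudef
  have hφdP : DifferentiableAt ℝ φ P :=
    (hφ1.contDiffAt (hV.mem_nhds hPV)).differentiableAt one_ne_zero
  have hbwP := bw_hasFDerivAt a b α P
  have hvD : HasFDerivAt v (fderiv ℝ φ P - δ • fderiv ℝ (bw a b α) P) P := by
    exact ((hφdP.hasFDerivAt.sub ((hbwP.differentiableAt.hasFDerivAt).const_mul δ)).add_const _)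
  have hlineP : HasDerivAt (fun t : ℝ => P + t • u) u 0 := by
    simpa using ((hasDerivAt_id (0:ℝ)).smul_const u).const_add P
  have h0P : P + (0:ℝ) • u = P := by simp
  have hvD' : HasFDerivAt v (fderiv ℝ φ P - δ • fderiv ℝ (bw a b α) P) (P + (0:ℝ) • u) := by
    rw [h0P]; exact hvD
  have hf0 : HasDerivAt (fun t : ℝ => v (P + t • u))
      ((fderiv ℝ φ P - δ • fderiv ℝ (bw a b α) P) u) 0 := by
    exact HasFDerivAt.comp_hasDerivAt 0 hvD' hlineP
  have hfnn : ∀ᶠ t in nhdsWithin (0:ℝ) (Set.Ioi 0), 0 ≤ v (P + t • u) := by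
    filter_upwards [Ioo_mem_nhdsGT_of_mem (Set.mem_Ico.mpr ⟨le_refl (0:ℝ), (by norm_num : (0:ℝ) < 1/2)⟩)] with t ht
    have hQt : Q (P + t • u) = (1 - t)^2 * r2 := by
      have hqp : (P.1 - a) * (P.1 - a) + (P.2 - b) * (P.2 - b) = r2 := hQP
      simp only [hQdef, Prod.fst_add, Prod.snd_add, Prod.smul_fst, Prod.smul_snd, smul_eq_mul,
        hudef]
      linear_combination (1 - t)^2 * hqp
    have hmem : P + t • u ∈ K := by
      simp only [hKdef, Set.mem_preimage, Set.mem_Icc, hQt]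
      rcases ht with ⟨ht0, ht1⟩
      constructor
      · have h12 : (1/2:ℝ) ≤ 1 - t := by linarith
        have hsq : (1/2:ℝ)^2 ≤ (1 - t)^2 := pow_le_pow_left₀ (by norm_num) h12 2
        have := mul_le_mul_of_nonneg_right hsq (le_of_lt hr2pos)
        calc r2/4 = (1/2:ℝ)^2 * r2 := by ring
          _ ≤ (1 - t)^2 * r2 := this
      · have h12 : (1 - t : ℝ) ≤ 1 := by linarith
        have hsq : (1 - t:ℝ)^2 ≤ 1 := pow_le_one₀ (by linarith) h12
        have := mul_le_mul_of_nonneg_right hsq (le_of_lt hr2pos)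
        calc (1 - t)^2 * r2 ≤ 1 * r2 := this
          _ = r2 := one_mul r2
    exact hv0 _ hmem
  have hf00 : v (P + (0:ℝ) • u) = 0 := by rw [h0P, hvP]
  have hDge := right_deriv_nonneg hf0 hf00 hfnn
  -- compute the bw term
  have hbwu : fderiv ℝ (bw a b α) P u = 16 * Mout := by
    rw [bw_fderiv_apply]
    have h1 : P.1 - a = τ * (P.1 - c.1) := by rw [hadef]; ring
    have h2 : P.2 - b = τ * (P.2 - c.2) := by rw [hbdef]; ring
    have hu1 : u.1 = -(τ * (P.1 - c.1)) := by rw [hudef, hadef]; ring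
    have hu2 : u.2 = -(τ * (P.2 - c.2)) := by rw [hudef, hbdef]; ring
    have hin : 2 * (P.1 - a) * u.1 + 2 * (P.2 - b) * u.2 = -2 * r2 := by
      rw [h1, h2, hu1, hu2, hr2def]
      linear_combination (-2 * τ^2) * hPc
    rw [hin]
    have hbwPv : bw a b α P = Mout := by rw [hbwval, hQP, hMoutdef]
    rw [hbwPv, hαdef]
    field_simp
    ring
  have hfinal : 0 < fderiv ℝ φ P u := by
    have happ : (fderiv ℝ φ P - δ • fderiv ℝ (bw a b α) P) u
        = fderiv ℝ φ P u - δ * (16 * Mout) := by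
      rw [ContinuousLinearMap.sub_apply, ContinuousLinearMap.smul_apply, hbwu, smul_eq_mul]
    rw [happ] at hDge
    have hMoutpos : 0 < Mout := Real.exp_pos _
    have h16 : (0:ℝ) < 16 * Mout := by linarith only [hMoutpos]
    linarith only [hDge, mul_pos hδ h16]
  intro hcontra
  rw [hcontra] at hfinal
  simp at hfinal


theorem hopf_nonzero_derivative
    (Ω : Set (ℝ × ℝ)) (hΩ : IsOpen Ω) (hΩbd : Bornology.IsBounded Ω)
    (lam : ℝ) (hlam : 0 ≤ lam)
    (P : ℝ × ℝ) (hP : P ∈ frontier Ω) (hball : InteriorBall Ω P)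
    (φ : ℝ × ℝ → ℝ)
    (V : Set (ℝ × ℝ)) (hV : IsOpen V) (hPV : P ∈ V) (hφ1 : ContDiffOn ℝ 1 φ V)
    (hφ2 : ContDiffOn ℝ 2 φ Ω)
    (heq : ∀ x ∈ Ω, lap φ x + lam * φ x = 0)
    (hφP : φ P = 0)
    (hnod : P ∉ closure {x ∈ Ω | φ x = 0}) :
    fderiv ℝ φ P ≠ 0 := by
  obtain ⟨c, ρ, hρ, hsub, hPc⟩ := hball
  rw [Metric.mem_closure_iff] at hnod
  push_neg at hnod
  obtain ⟨ε, hε, hsep⟩ := hnod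
  -- no zeros of φ near P inside Ω
  have hnz : ∀ x : ℝ × ℝ, x ∈ Ω → (x.1 - P.1)^2 + (x.2 - P.2)^2 < ε^2 → φ x ≠ 0 := by
    intro x hx hdist h0
    have hge := hsep x ⟨hx, h0⟩
    have hd : dist P x < ε := by
      rw [Prod.dist_eq]
      have key : ∀ s w : ℝ, (w - s)^2 < ε^2 → dist s w < ε := by
        intro s w hsq
        rw [Real.dist_eq]
        have h1 := Real.sqrt_lt_sqrt (sq_nonneg (w - s)) hsq
        rw [Real.sqrt_sq_eq_abs, Real.sqrt_sq (le_of_lt hε)] at h1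
        rw [abs_sub_comm] at h1
        exact h1
      apply max_lt
      · exact key P.1 x.1 (by nlinarith [sq_nonneg (x.2 - P.2)])
      · exact key P.2 x.2 (by nlinarith [sq_nonneg (x.1 - P.1)])
    linarith only [hge, hd]
  -- the connected neighbourhood where φ has no zeros
  set U : Set (ℝ × ℝ) := {x : ℝ × ℝ | (x.1 - c.1)^2 + (x.2 - c.2)^2 < ρ^2} ∩
    {x : ℝ × ℝ | (x.1 - P.1)^2 + (x.2 - P.2)^2 < ε^2} with hUdef
  have hUconv : Convex ℝ U := (eball_convex c (ρ^2)).inter (eball_convex P (ε^2))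
  have hUΩ : U ⊆ Ω := fun x hx => hsub hx.1
  have hUnz : ∀ x ∈ U, φ x ≠ 0 := fun x hx => hnz x (hUΩ hx) hx.2
  have hφcontU : ContinuousOn φ U := (hφ2.continuousOn).mono hUΩ
  -- a test point q ∈ U
  set t : ℝ := min (1/2) (ε/(2*ρ)) with htdef
  have ht0 : 0 < t := lt_min (by norm_num) (by positivity)
  have ht1 : t ≤ 1/2 := min_le_left _ _
  have htρ : t * ρ ≤ ε / 2 := by
    calc t * ρ ≤ (ε/(2*ρ)) * ρ :=
          mul_le_mul_of_nonneg_right (min_le_right _ _) (le_of_lt hρ)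
      _ = ε / 2 := by field_simp
  set q : ℝ × ℝ := (P.1 + t*(c.1 - P.1), P.2 + t*(c.2 - P.2)) with hqdef
  have hqc : (q.1 - c.1)^2 + (q.2 - c.2)^2 = (1 - t)^2 * ρ^2 := by
    simp only [hqdef]
    linear_combination (1 - t)^2 * hPc
  have hqP : (q.1 - P.1)^2 + (q.2 - P.2)^2 = t^2 * ρ^2 := by
    simp only [hqdef]
    linear_combination t^2 * hPc
  have hqU : q ∈ U := by
    constructor
    · show (q.1 - c.1)^2 + (q.2 - c.2)^2 < ρ^2
      rw [hqc]
      nlinarith [mul_pos (mul_pos ht0 (show (0:ℝ) < 2 - t by linarith)) (mul_pos hρ hρ)]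
    · show (q.1 - P.1)^2 + (q.2 - P.2)^2 < ε^2
      rw [hqP]
      have h1 : (t*ρ)^2 ≤ (ε/2)^2 := pow_le_pow_left₀ (by positivity) htρ 2
      nlinarith [h1, hε]
  rcases lt_or_gt_of_ne (hUnz q hqU) with hqneg | hqpos
  · -- φ < 0 near P : apply the key lemma to -φ
    have hUneg : ∀ x : ℝ × ℝ, (x.1 - c.1)^2 + (x.2 - c.2)^2 < ρ^2 →
        (x.1 - P.1)^2 + (x.2 - P.2)^2 < ε^2 → 0 < -φ x := by
      intro x h1 h2
      have hxU : x ∈ U := ⟨h1, h2⟩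
      rcases lt_trichotomy (φ x) 0 with h | h | h
      · linarith
      · exact absurd h (hUnz x hxU)
      · exfalso
        have hiv := (hUconv.isPreconnected).intermediate_value hqU hxU hφcontU
        have h0m : (0:ℝ) ∈ Icc (φ q) (φ x) := ⟨le_of_lt hqneg, le_of_lt h⟩
        obtain ⟨z, hzU, hz0⟩ := hiv h0m
        exact hUnz z hzU hz0
    have heqψ : ∀ x : ℝ × ℝ, (x.1 - c.1)^2 + (x.2 - c.2)^2 < ρ^2 →
        lap (fun y => -φ y) x + lam * (-φ x) = 0 := by
      intro x hx
      rw [lap_neg]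
      have := heq x (hsub hx)
      linarith only [this]
    have hres := key_hopf c P ρ ε lam hρ hε hlam hPc (fun y => -φ y) V hV hPV hφ1.neg
      ((hφ2.mono hsub).neg) heqψ (by simp [hφP]) hUneg
    intro hcontra
    apply hres
    have : fderiv ℝ (fun y => -φ y) P = -fderiv ℝ φ P := fderiv_neg
    rw [this, hcontra]
    simp
  · -- φ > 0 near P : apply the key lemma to φ
    have hUpos : ∀ x : ℝ × ℝ, (x.1 - c.1)^2 + (x.2 - c.2)^2 < ρ^2 →
        (x.1 - P.1)^2 + (x.2 - P.2)^2 < ε^2 → 0 < φ x := by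
      intro x h1 h2
      have hxU : x ∈ U := ⟨h1, h2⟩
      rcases lt_trichotomy (φ x) 0 with h | h | h
      · exfalso
        have hiv := (hUconv.isPreconnected).intermediate_value hxU hqU hφcontU
        have h0m : (0:ℝ) ∈ Icc (φ x) (φ q) := ⟨le_of_lt h, le_of_lt hqpos⟩
        obtain ⟨z, hzU, hz0⟩ := hiv h0m
        exact hUnz z hzU hz0
      · exact absurd h (hUnz x hxU)
      · exact h
    exact key_hopf c P ρ ε lam hρ hε hlam hPc φ V hV hPV hφ1 (hφ2.mono hsub)
      (fun x hx => heq x (hsub hx)) hφP hUpos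
end

section
/- Let r₀ > 0, let Ω̃ ⊆ {(r,θ) ∈ ℝ² : r > r₀} be open and bounded, let λ ≥ 0 be a real number, and let P ∈ ∂Ω̃ satisfy the interior ball condition: there exists an open ball B ⊆ Ω̃ with P ∈ ∂B. Let u : ℝ² → ℝ be continuously differentiable on an open neighborhood of P and twice continuously differentiable on Ω̃, with (Lu)(r,θ) + λ·u(r,θ) = 0 for all (r,θ) ∈ Ω̃ and u(P) = 0. If P does not belong to the closure of {p ∈ Ω̃ : u(p) = 0}, then fderiv u P ≠ 0. -/
/-- The polar-form elliptic operator
`(Lu)(r,θ) = ∂²u/∂r² + (1/r²)·∂²u/∂θ² + (1/r)·∂u/∂r`. -/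
noncomputable def Lpolar (u : ℝ × ℝ → ℝ) (p : ℝ × ℝ) : ℝ :=
  pd1 (pd1 u) p + (1 / p.1 ^ 2) * pd2 (pd2 u) p + (1 / p.1) * pd1 u p

open Filter Set Topology

lemma second_deriv_test {g g' : ℝ → ℝ} {g'' : ℝ}
    (hd : ∀ᶠ t in 𝓝 (0:ℝ), HasDerivAt g (g' t) t)
    (hd2 : HasDerivAt g' g'' 0)
    (hmin : IsLocalMin g 0) : 0 ≤ g'' := by
  by_contra hneg
  push_neg at hneg
  have h00 : HasDerivAt g (g' 0) 0 := hd.self_of_nhds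
  have h0 : g' 0 = 0 := by
    have := hmin.deriv_eq_zero
    rwa [h00.deriv] at this
  have hslope : Tendsto (slope g' 0) (𝓝[>] (0:ℝ)) (𝓝 g'') :=
    (hasDerivAt_iff_tendsto_slope.mp hd2).mono_left
      (nhdsWithin_mono _ (fun t ht => ne_of_gt ht))
  have hev1 : ∀ᶠ t in 𝓝[>] (0:ℝ), slope g' 0 t < 0 :=
    hslope.eventually (Filter.Tendsto.eventually_lt_const hneg tendsto_id) |>.mono (fun t ht => ht)
  have hev : ∀ᶠ t in 𝓝[>] (0:ℝ),
      g 0 ≤ g t ∧ g' t < 0 ∧ HasDerivAt g (g' t) t := by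
    filter_upwards [hev1, (hd.and hmin).filter_mono nhdsWithin_le_nhds,
      self_mem_nhdsWithin] with t h1 h2 h3
    refine ⟨h2.2, ?_, h2.1⟩
    have h3' : (0:ℝ) < t := h3
    have : slope g' 0 t = g' t / t := by simp [slope, h0, div_eq_inv_mul]
    rw [this] at h1
    rcases div_neg_iff.mp h1 with h | h
    · linarith [h.2]
    · exact h.1
  obtain ⟨η, hη, hI⟩ := mem_nhdsGT_iff_exists_Ioo_subset.mp hev
  set t₀ := η / 2 with ht₀
  have ht₀mem : ∀ t ∈ Ioc (0:ℝ) t₀, g 0 ≤ g t ∧ g' t < 0 ∧ HasDerivAt g (g' t) t := by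
    intro t ht
    have hη' : (0:ℝ) < η := hη
    exact hI ⟨ht.1, lt_of_le_of_lt ht.2 (by linarith)⟩
  have hη' : (0:ℝ) < η := hη
  have ht₀pos : 0 < t₀ := by positivity
  have hcont : ContinuousOn g (Icc 0 t₀) := by
    intro t ht
    rcases eq_or_lt_of_le ht.1 with h | h
    · exact (h ▸ h00.continuousAt).continuousWithinAt
    · exact ((ht₀mem t ⟨h, ht.2⟩).2.2.continuousAt).continuousWithinAt
  have hanti : StrictAntiOn g (Icc 0 t₀) := by
    apply strictAntiOn_of_deriv_neg (convex_Icc _ _) hcont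
    intro t ht
    rw [interior_Icc] at ht
    obtain ⟨h1, h2, h3⟩ := ht₀mem t ⟨ht.1, ht.2.le⟩
    rw [h3.deriv]; exact h2
  have := hanti (left_mem_Icc.mpr ht₀pos.le) (right_mem_Icc.mpr ht₀pos.le) ht₀pos
  have := (ht₀mem t₀ ⟨ht₀pos, le_rfl⟩).1
  linarith

lemma second_deriv_test_dir (f : ℝ × ℝ → ℝ) (x₀ v : ℝ × ℝ)
    (hdiff : ∀ᶠ p in 𝓝 x₀, DifferentiableAt ℝ f p)
    (hd2 : DifferentiableAt ℝ (fun p => fderiv ℝ f p v) x₀)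
    (hmin : IsLocalMin f x₀) :
    0 ≤ fderiv ℝ (fun p => fderiv ℝ f p v) x₀ v := by
  set γ : ℝ → ℝ × ℝ := fun t => x₀ + t • v with hγ
  have hγd : ∀ t : ℝ, HasDerivAt γ v t := by
    intro t
    simpa [hγ] using ((hasDerivAt_id t).smul_const v).const_add x₀
  have hγ0 : γ 0 = x₀ := by simp [hγ]
  have hγc : ContinuousAt γ 0 := (hγd 0).continuousAt
  have hγc0 : Tendsto γ (𝓝 0) (𝓝 x₀) := by
    unfold ContinuousAt at hγc; rwa [hγ0] at hγc
  have hd : ∀ᶠ t in 𝓝 (0:ℝ), HasDerivAt (fun s => f (γ s)) (fderiv ℝ f (γ t) v) t := by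
    filter_upwards [hγc0.eventually hdiff] with t ht
    exact ht.hasFDerivAt.comp_hasDerivAt t (hγd t)
  have hd2' : HasDerivAt (fun t => fderiv ℝ f (γ t) v) (fderiv ℝ (fun p => fderiv ℝ f p v) x₀ v) 0 := by
    have h2 : HasFDerivAt (fun p => fderiv ℝ f p v)
        (fderiv ℝ (fun p => fderiv ℝ f p v) x₀) (γ 0) := by
      rw [hγ0]; exact hd2.hasFDerivAt
    exact h2.comp_hasDerivAt 0 (hγd 0)
  have hmin' : IsLocalMin (fun s => f (γ s)) 0 := by
    have := hγc0.eventually hmin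
    simpa [IsLocalMin, IsMinFilter, hγ0] using this
  exact second_deriv_test hd hd2' hmin'

noncomputable def efun (c : ℝ × ℝ) (α : ℝ) (x : ℝ × ℝ) : ℝ :=
  Real.exp (-(α * ((x.1 - c.1) ^ 2 + (x.2 - c.2) ^ 2)))

lemma efun_hasFDerivAt (c : ℝ × ℝ) (α : ℝ) (x : ℝ × ℝ) :
    HasFDerivAt (efun c α)
      (Real.exp (-(α * ((x.1 - c.1) ^ 2 + (x.2 - c.2) ^ 2))) •
        -(α • (((x.1 - c.1) • (ContinuousLinearMap.fst ℝ ℝ ℝ) +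
                (x.1 - c.1) • (ContinuousLinearMap.fst ℝ ℝ ℝ)) +
               ((x.2 - c.2) • (ContinuousLinearMap.snd ℝ ℝ ℝ) +
                (x.2 - c.2) • (ContinuousLinearMap.snd ℝ ℝ ℝ))))) x := by
  have h1 : HasFDerivAt (fun y : ℝ × ℝ => y.1 - c.1)
      (ContinuousLinearMap.fst ℝ ℝ ℝ) x := (hasFDerivAt_fst).sub_const c.1
  have h2 : HasFDerivAt (fun y : ℝ × ℝ => y.2 - c.2)
      (ContinuousLinearMap.snd ℝ ℝ ℝ) x := (hasFDerivAt_snd).sub_const c.2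
  have h := ((((h1.mul h1).add (h2.mul h2)).const_mul α).neg).exp
  simp only [← pow_two] at h
  exact h

lemma efun_pd1 (c : ℝ × ℝ) (α : ℝ) (x : ℝ × ℝ) :
    pd1 (efun c α) x = -(2 * α * (x.1 - c.1)) * efun c α x := by
  rw [pd1, (efun_hasFDerivAt c α x).fderiv]
  simp [efun]; ring

lemma efun_pd2 (c : ℝ × ℝ) (α : ℝ) (x : ℝ × ℝ) :
    pd2 (efun c α) x = -(2 * α * (x.2 - c.2)) * efun c α x := by
  rw [pd2, (efun_hasFDerivAt c α x).fderiv]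
  simp [efun]; ring

lemma W1_pd1 (c : ℝ × ℝ) (α : ℝ) (x : ℝ × ℝ) :
    pd1 (fun y => -(2 * α * (y.1 - c.1)) * efun c α y) x
      = (-(2 * α) + 4 * α ^ 2 * (x.1 - c.1) ^ 2) * efun c α x := by
  have h1 : HasFDerivAt (fun y : ℝ × ℝ => -(2 * α * (y.1 - c.1)))
      (-((2 * α) • (ContinuousLinearMap.fst ℝ ℝ ℝ))) x := by
    have := ((hasFDerivAt_fst (p := x) (𝕜 := ℝ)).sub_const c.1).const_mul (2 * α)
    exact this.neg
  have h := h1.mul (efun_hasFDerivAt c α x)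
  rw [pd1, show (fun y => -(2 * α * (y.1 - c.1)) * efun c α y) = (fun y => -(2 * α * (y.1 - c.1))) * efun c α from rfl, h.fderiv]
  simp [efun]; ring

lemma W2_pd2 (c : ℝ × ℝ) (α : ℝ) (x : ℝ × ℝ) :
    pd2 (fun y => -(2 * α * (y.2 - c.2)) * efun c α y) x
      = (-(2 * α) + 4 * α ^ 2 * (x.2 - c.2) ^ 2) * efun c α x := by
  have h1 : HasFDerivAt (fun y : ℝ × ℝ => -(2 * α * (y.2 - c.2)))
      (-((2 * α) • (ContinuousLinearMap.snd ℝ ℝ ℝ))) x := by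
    have := ((hasFDerivAt_snd (p := x) (𝕜 := ℝ)).sub_const c.2).const_mul (2 * α)
    exact this.neg
  have h := h1.mul (efun_hasFDerivAt c α x)
  rw [pd2, show (fun y => -(2 * α * (y.2 - c.2)) * efun c α y) = (fun y => -(2 * α * (y.2 - c.2))) * efun c α from rfl, h.fderiv]
  simp [efun]; ring

lemma wfun_pd1 (c : ℝ × ℝ) (α β : ℝ) :
    pd1 (fun y => efun c α y - β) = fun x => -(2 * α * (x.1 - c.1)) * efun c α x := by
  funext x
  rw [pd1, fderiv_sub_const, ← pd1, efun_pd1]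

lemma wfun_pd2 (c : ℝ × ℝ) (α β : ℝ) :
    pd2 (fun y => efun c α y - β) = fun x => -(2 * α * (x.2 - c.2)) * efun c α x := by
  funext x
  rw [pd2, fderiv_sub_const, ← pd2, efun_pd2]

lemma Lpolar_wfun (c : ℝ × ℝ) (α β : ℝ) (x : ℝ × ℝ) :
    Lpolar (fun y => efun c α y - β) x
      = ((-(2 * α) + 4 * α ^ 2 * (x.1 - c.1) ^ 2)
        + (1 / x.1 ^ 2) * (-(2 * α) + 4 * α ^ 2 * (x.2 - c.2) ^ 2)
        + (1 / x.1) * (-(2 * α * (x.1 - c.1)))) * efun c α x := by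
  rw [Lpolar, wfun_pd1, wfun_pd2, W1_pd1, W2_pd2]
  simp only []
  ring

lemma sqrt_tri (p q w z : ℝ) :
    Real.sqrt ((p + w) ^ 2 + (q + z) ^ 2)
      ≤ Real.sqrt (p ^ 2 + q ^ 2) + Real.sqrt (w ^ 2 + z ^ 2) := by
  have hA : (0:ℝ) ≤ p ^ 2 + q ^ 2 := by positivity
  have hB : (0:ℝ) ≤ w ^ 2 + z ^ 2 := by positivity
  have hdot : p * w + q * z ≤ Real.sqrt ((p ^ 2 + q ^ 2) * (w ^ 2 + z ^ 2)) := by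
    have h1 : p * w + q * z ≤ Real.sqrt ((p * w + q * z) ^ 2) := by
      rw [Real.sqrt_sq_eq_abs]; exact le_abs_self _
    refine h1.trans (Real.sqrt_le_sqrt ?_)
    nlinarith [sq_nonneg (p * z - q * w)]
  have key : (p + w) ^ 2 + (q + z) ^ 2
      ≤ (Real.sqrt (p ^ 2 + q ^ 2) + Real.sqrt (w ^ 2 + z ^ 2)) ^ 2 := by
    have e1 : Real.sqrt (p ^ 2 + q ^ 2) ^ 2 = p ^ 2 + q ^ 2 := Real.sq_sqrt hA
    have e2 : Real.sqrt (w ^ 2 + z ^ 2) ^ 2 = w ^ 2 + z ^ 2 := Real.sq_sqrt hB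
    have e3 : Real.sqrt (p ^ 2 + q ^ 2) * Real.sqrt (w ^ 2 + z ^ 2)
        = Real.sqrt ((p ^ 2 + q ^ 2) * (w ^ 2 + z ^ 2)) := (Real.sqrt_mul hA _).symm
    nlinarith [hdot]
  calc Real.sqrt ((p + w) ^ 2 + (q + z) ^ 2)
      ≤ Real.sqrt ((Real.sqrt (p ^ 2 + q ^ 2) + Real.sqrt (w ^ 2 + z ^ 2)) ^ 2) :=
        Real.sqrt_le_sqrt key
    _ = _ := Real.sqrt_sq (by positivity)

def qd (c x : ℝ × ℝ) : ℝ := (x.1 - c.1) ^ 2 + (x.2 - c.2) ^ 2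

lemma qd_continuous (c : ℝ × ℝ) : Continuous (qd c) := by
  unfold qd; fun_prop

lemma efun_eq_exp_qd (c : ℝ × ℝ) (α : ℝ) (x : ℝ × ℝ) :
    efun c α x = Real.exp (-(α * qd c x)) := rfl

lemma W1_diff (c : ℝ × ℝ) (α : ℝ) (x : ℝ × ℝ) :
    DifferentiableAt ℝ (fun y => -(2 * α * (y.1 - c.1)) * efun c α y) x := by
  apply DifferentiableAt.mul
  · fun_prop
  · exact (efun_hasFDerivAt c α x).differentiableAt

lemma W2_diff (c : ℝ × ℝ) (α : ℝ) (x : ℝ × ℝ) :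
    DifferentiableAt ℝ (fun y => -(2 * α * (y.2 - c.2)) * efun c α y) x := by
  apply DifferentiableAt.mul
  · fun_prop
  · exact (efun_hasFDerivAt c α x).differentiableAt

lemma efun_continuous (c : ℝ × ℝ) (α : ℝ) : Continuous (efun c α) := by
  unfold efun; fun_prop

lemma abs_le_sqrt_of_sq_le {d b : ℝ} (h : d ^ 2 ≤ b) : |d| ≤ Real.sqrt b := by
  rw [← Real.sqrt_sq_eq_abs]; exact Real.sqrt_le_sqrt h

lemma compact_qd_slice (c : ℝ × ℝ) (a b : ℝ) :
    IsCompact {x : ℝ × ℝ | a ≤ qd c x ∧ qd c x ≤ b} := by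
  apply Metric.isCompact_of_isClosed_isBounded
  · have : {x : ℝ × ℝ | a ≤ qd c x ∧ qd c x ≤ b} = (qd c) ⁻¹' (Icc a b) := rfl
    rw [this]; exact isClosed_Icc.preimage (qd_continuous c)
  · apply (Metric.isBounded_closedBall (x := c) (r := Real.sqrt b)).subset
    intro x hx
    have h1 : (x.1 - c.1) ^ 2 ≤ b := by
      have := hx.2; unfold qd at this; nlinarith [sq_nonneg (x.2 - c.2)]
    have h2 : (x.2 - c.2) ^ 2 ≤ b := by
      have := hx.2; unfold qd at this; nlinarith [sq_nonneg (x.1 - c.1)]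
    simp only [Metric.mem_closedBall, Prod.dist_eq, Real.dist_eq, max_le_iff]
    exact ⟨abs_le_sqrt_of_sq_le h1, abs_le_sqrt_of_sq_le h2⟩

lemma helper_one_le_sq {M : ℝ} (h : 1 ≤ M) : (1:ℝ) ≤ M ^ 2 := by nlinarith

lemma helper_le_sq {x M : ℝ} (hx : 0 ≤ x) (hxM : x ≤ M) (hM : 1 ≤ M) :
    x ≤ M ^ 2 ∧ x ^ 2 ≤ M ^ 2 := by constructor <;> nlinarith

lemma helper_sq_mono {a b : ℝ} (ha : 0 ≤ a) (hab : a ≤ b) : a ^ 2 ≤ b ^ 2 := by nlinarith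

lemma helper_d1_le {d1 ρ : ℝ} (hρ : 0 < ρ) (h : d1 ^ 2 ≤ ρ ^ 2) : d1 ≤ ρ := by nlinarith

lemma helper_onemt {t ρ : ℝ} (hρ2 : 0 < ρ ^ 2) (h0 : 0 < t) (h12 : t < 1/2) :
    ρ ^ 2 / 4 ≤ (1 - t) ^ 2 * ρ ^ 2 ∧ (1 - t) ^ 2 * ρ ^ 2 ≤ ρ ^ 2 := by
  have h1 : (1:ℝ)/4 ≤ (1 - t) ^ 2 := by nlinarith [sq_nonneg (1 - t - 1/2)]
  have h2 : (1 - t) ^ 2 ≤ 1 := by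
    nlinarith [mul_nonneg h0.le (show (0:ℝ) ≤ 2 - t by linarith)]
  constructor
  · nlinarith [mul_le_mul_of_nonneg_right h1 hρ2.le]
  · nlinarith [mul_le_mul_of_nonneg_right h2 hρ2.le]

lemma helper_tsq {t ρ : ℝ} (ht0 : 0 < t) (ht1 : t < 1) (hρ2 : 0 < ρ ^ 2) :
    t ^ 2 * ρ ^ 2 < ρ ^ 2 := by
  have h1 : t ^ 2 < 1 := by nlinarith
  nlinarith [mul_lt_mul_of_pos_right h1 hρ2]

lemma bracket_pos {K μ ρ α s d1 d2 : ℝ}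
    (hρ : 0 < ρ) (hμpos : 0 < μ) (hμ1 : μ ≤ 1) (hμs2 : μ ≤ s ^ 2)
    (hs0 : 0 < s) (hsK1 : s ≤ K) (hsK2 : s ^ 2 ≤ K)
    (hq : ρ ^ 2 / 4 ≤ d1 ^ 2 + d2 ^ 2) (hd1sq : d1 ^ 2 ≤ ρ ^ 2)
    (hαkey : 2 * (K + 1) + 2 * ρ * K + μ * ρ ^ 2 = α * (μ * ρ ^ 2)) (hαpos : 0 < α) :
    0 < 4 * α ^ 2 * (d1 ^ 2 * s ^ 2 + d2 ^ 2) - 2 * α * (s ^ 2 + 1) - 2 * α * (d1 * s) := by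
  have t0 : 0 ≤ (s ^ 2 - μ) * d1 ^ 2 :=
    mul_nonneg (sub_nonneg.mpr hμs2) (sq_nonneg d1)
  have t0b : 0 ≤ (1 - μ) * d2 ^ 2 :=
    mul_nonneg (sub_nonneg.mpr hμ1) (sq_nonneg d2)
  have e1 : μ * (d1 ^ 2 + d2 ^ 2) ≤ d1 ^ 2 * s ^ 2 + d2 ^ 2 := by nlinarith
  have e2a : 4 * α ^ 2 * (μ * (d1 ^ 2 + d2 ^ 2)) ≤ 4 * α ^ 2 * (d1 ^ 2 * s ^ 2 + d2 ^ 2) :=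
    mul_le_mul_of_nonneg_left e1 (by positivity)
  have e2b : 4 * α ^ 2 * (μ * (ρ ^ 2 / 4)) ≤ 4 * α ^ 2 * (μ * (d1 ^ 2 + d2 ^ 2)) :=
    mul_le_mul_of_nonneg_left (mul_le_mul_of_nonneg_left hq hμpos.le) (by positivity)
  have eq1 : 4 * α ^ 2 * (μ * (ρ ^ 2 / 4)) = α * (α * (μ * ρ ^ 2)) := by ring
  have eA : α * (α * (μ * ρ ^ 2)) ≤ 4 * α ^ 2 * (d1 ^ 2 * s ^ 2 + d2 ^ 2) := by linarith
  have eB : α * (α * (μ * ρ ^ 2)) = 2 * α * K + 2 * α + 2 * α * (ρ * K) + α * (μ * ρ ^ 2) := by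
    nth_rewrite 1 [← hαkey]; ring
  have hd1le : d1 ≤ ρ := helper_d1_le hρ hd1sq
  have t1 : 2 * α * s ^ 2 ≤ 2 * α * K := mul_le_mul_of_nonneg_left hsK2 (by positivity)
  have t2 : 2 * α * (d1 * s) ≤ 2 * α * (ρ * K) := by
    apply mul_le_mul_of_nonneg_left _ (by positivity : (0:ℝ) ≤ 2 * α)
    exact le_trans (mul_le_mul_of_nonneg_right hd1le hs0.le)
      (mul_le_mul_of_nonneg_left hsK1 hρ.le)
  have t3 : 0 < α * (μ * ρ ^ 2) := mul_pos hαpos (by positivity)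
  nlinarith [eA, eB, t1, t2, t3]

set_option maxHeartbeats 1000000 in
lemma hopf_core (r₀ R : ℝ) (hr₀ : 0 < r₀)
    (Ω : Set (ℝ × ℝ)) (hΩ : IsOpen Ω)
    (c P : ℝ × ℝ) (ρ : ℝ) (hρ : 0 < ρ)
    (hPc : qd c P = ρ ^ 2)
    (hsub : ∀ x, qd c x < ρ ^ 2 → x ∈ Ω)
    (hcoord : ∀ x ∈ Ω, r₀ < x.1 ∧ x.1 ≤ R)
    (u : ℝ × ℝ → ℝ)
    (V : Set (ℝ × ℝ)) (hV : IsOpen V) (hVsub : ∀ x, qd c x ≤ ρ ^ 2 → x ∈ V)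
    (hu1 : ContDiffOn ℝ 1 u V)
    (hu2 : ContDiffOn ℝ 2 u Ω)
    (hLu : ∀ x, qd c x < ρ ^ 2 → Lpolar u x ≤ 0)
    (hupos : ∀ x, qd c x < ρ ^ 2 → 0 < u x)
    (huP : u P = 0) :
    0 < fderiv ℝ u P (c.1 - P.1, c.2 - P.2) := by
  have hρ2 : (0:ℝ) < ρ ^ 2 := by positivity
  -- constants
  set M : ℝ := max R 1 with hM
  set K : ℝ := M ^ 2 with hK
  have hM1 : (1:ℝ) ≤ M := le_max_right _ _
  have hK1 : (1:ℝ) ≤ K := helper_one_le_sq hM1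
  have hsK : ∀ x ∈ Ω, x.1 ≤ K ∧ x.1 ^ 2 ≤ K := by
    intro x hx
    have h1 : x.1 ≤ M := le_trans (hcoord x hx).2 (le_max_left _ _)
    exact helper_le_sq (le_of_lt (hr₀.trans (hcoord x hx).1)) h1 hM1
  set μ : ℝ := min (r₀ ^ 2) 1 with hμ
  have hμpos : 0 < μ := by positivity
  have hμ1 : μ ≤ 1 := min_le_right _ _
  have hμr : μ ≤ r₀ ^ 2 := min_le_left _ _
  set α : ℝ := (2 * (K + 1) + 2 * ρ * K) / (μ * ρ ^ 2) + 1 with hα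
  have hαpos : 0 < α := by
    rw [hα]; positivity
  have hαkey : 2 * (K + 1) + 2 * ρ * K + μ * ρ ^ 2 = α * (μ * ρ ^ 2) := by
    rw [hα]; field_simp
  clear_value M K μ α
  clear hα hμ hK hM
  set β : ℝ := Real.exp (-(α * ρ ^ 2)) with hβ
  clear_value β
  -- positivity of Lpolar of the barrier on the annulus
  have hLw : ∀ x ∈ Ω, ρ ^ 2 / 4 ≤ qd c x → qd c x ≤ ρ ^ 2 →
      0 < Lpolar (fun y => efun c α y - β) x := by
    intro x hxΩ h1 h2
    obtain ⟨hs1, hsR⟩ := hcoord x hxΩ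
    obtain ⟨hsK1, hsK2⟩ := hsK x hxΩ
    have hs0 : 0 < x.1 := hr₀.trans hs1
    have hμs2 : μ ≤ x.1 ^ 2 :=
      le_trans hμr (helper_sq_mono hr₀.le hs1.le)
    rw [Lpolar_wfun]
    apply mul_pos _ (Real.exp_pos _)
    have hqd : qd c x = (x.1 - c.1) ^ 2 + (x.2 - c.2) ^ 2 := rfl
    set d1 : ℝ := x.1 - c.1 with hd1def
    set d2 : ℝ := x.2 - c.2 with hd2def
    set s : ℝ := x.1 with hsdef
    have hd1sq : d1 ^ 2 ≤ ρ ^ 2 := by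
      have := sq_nonneg d2; linarith [hqd, h2]
    have hq' : ρ ^ 2 / 4 ≤ d1 ^ 2 + d2 ^ 2 := by rw [← hqd]; exact h1
    have hPnum : 0 < 4 * α ^ 2 * (d1 ^ 2 * s ^ 2 + d2 ^ 2) - 2 * α * (s ^ 2 + 1) - 2 * α * (d1 * s) :=
      bracket_pos hρ hμpos hμ1 hμs2 hs0 hsK1 hsK2 hq' hd1sq hαkey hαpos
    have hbr : (-(2 * α) + 4 * α ^ 2 * d1 ^ 2)
        + (1 / s ^ 2) * (-(2 * α) + 4 * α ^ 2 * d2 ^ 2)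
        + (1 / s) * (-(2 * α * d1))
        = (4 * α ^ 2 * (d1 ^ 2 * s ^ 2 + d2 ^ 2) - 2 * α * (s ^ 2 + 1) - 2 * α * (d1 * s)) / s ^ 2 := by
      field_simp
      ring
    rw [hbr]
    exact div_pos hPnum (by positivity)
  -- inner sphere minimum
  have hScpt := compact_qd_slice c (ρ ^ 2 / 4) (ρ ^ 2 / 4)
  have hq1 : qd c (c.1 + ρ / 2, c.2) = ρ ^ 2 / 4 := by unfold qd; simp; ring
  have hSne : {x : ℝ × ℝ | ρ ^ 2 / 4 ≤ qd c x ∧ qd c x ≤ ρ ^ 2 / 4}.Nonempty :=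
    ⟨(c.1 + ρ / 2, c.2), le_of_eq hq1.symm, le_of_eq hq1⟩
  have hSsubΩ : {x : ℝ × ℝ | ρ ^ 2 / 4 ≤ qd c x ∧ qd c x ≤ ρ ^ 2 / 4} ⊆ Ω := by
    intro x hx
    exact hsub x (by have := hx.2; linarith)
  obtain ⟨xm, hxmS, hxm_min⟩ := hScpt.exists_isMinOn hSne (hu2.continuousOn.mono hSsubΩ)
  have hum : 0 < u xm := hupos xm (by have := hxmS.2; linarith)
  set Win : ℝ := Real.exp (-(α * (ρ ^ 2 / 4))) - β with hWin
  have hWinpos : 0 < Win := by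
    rw [hWin, hβ]
    have h1 : 0 < α * ρ ^ 2 := mul_pos hαpos hρ2
    have h2 : Real.exp (-(α * ρ ^ 2)) < Real.exp (-(α * (ρ ^ 2 / 4))) := by
      apply Real.exp_lt_exp.mpr; linarith
    linarith
  clear_value Win
  set ε : ℝ := u xm / Win with hε
  have hεpos : 0 < ε := div_pos hum hWinpos
  clear_value ε
  set h : ℝ × ℝ → ℝ := fun y => u y - ε * (efun c α y - β) with hh
  clear_value h
  -- the annulus and its minimum
  have hAcpt := compact_qd_slice c (ρ ^ 2 / 4) (ρ ^ 2)
  have hPA : P ∈ {x : ℝ × ℝ | ρ ^ 2 / 4 ≤ qd c x ∧ qd c x ≤ ρ ^ 2} :=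
    ⟨by rw [hPc]; linarith, le_of_eq hPc⟩
  have hAsubV : {x : ℝ × ℝ | ρ ^ 2 / 4 ≤ qd c x ∧ qd c x ≤ ρ ^ 2} ⊆ V :=
    fun x hx => hVsub x hx.2
  have hconth : ContinuousOn h {x : ℝ × ℝ | ρ ^ 2 / 4 ≤ qd c x ∧ qd c x ≤ ρ ^ 2} := by
    rw [hh]
    exact (hu1.continuousOn.mono hAsubV).sub
      ((continuous_const.mul ((efun_continuous c α).sub continuous_const)).continuousOn)
  obtain ⟨x₀, hx₀A, hx₀min⟩ := hAcpt.exists_isMinOn ⟨P, hPA⟩ hconth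
  -- outer boundary nonnegativity
  have houter : ∀ x : ℝ × ℝ, qd c x = ρ ^ 2 → 0 ≤ u x := by
    intro x hx
    have hxV : x ∈ V := hVsub x (le_of_eq hx)
    have hcux : ContinuousAt u x := hu1.continuousOn.continuousAt (hV.mem_nhds hxV)
    have hγc : Continuous (fun t : ℝ => ((c.1 + t * (x.1 - c.1), c.2 + t * (x.2 - c.2)) : ℝ × ℝ)) := by
      fun_prop
    have htend : Tendsto (fun t : ℝ => u (c.1 + t * (x.1 - c.1), c.2 + t * (x.2 - c.2)))
        (𝓝[<] 1) (𝓝 (u x)) := by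
      have h1 := hγc.tendsto 1
      have h2 : ((c.1 + 1 * (x.1 - c.1), c.2 + 1 * (x.2 - c.2)) : ℝ × ℝ) = x := by
        rw [show c.1 + 1 * (x.1 - c.1) = x.1 by ring, show c.2 + 1 * (x.2 - c.2) = x.2 by ring]
      rw [h2] at h1
      exact hcux.tendsto.comp (h1.mono_left nhdsWithin_le_nhds)
    refine ge_of_tendsto htend ?_
    filter_upwards [Ioo_mem_nhdsLT_of_mem (show (1:ℝ) ∈ Ioc 0 1 by norm_num)] with t ht
    refine le_of_lt (hupos _ ?_)
    have hqt : qd c (c.1 + t * (x.1 - c.1), c.2 + t * (x.2 - c.2)) = t ^ 2 * ρ ^ 2 := by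
      rw [← hx]; unfold qd; simp; ring
    rw [hqt]
    exact helper_tsq ht.1 ht.2 hρ2
  -- the minimum value is nonnegative
  have hkey : 0 ≤ h x₀ := by
    rcases eq_or_lt_of_le hx₀A.1 with heq1 | hlt1
    · -- inner sphere
      have hwx₀ : efun c α x₀ - β = Win := by
        rw [efun_eq_exp_qd, ← heq1, hWin]
      have hmle : u xm ≤ u x₀ := isMinOn_iff.mp hxm_min x₀ ⟨le_of_eq heq1, le_of_eq heq1.symm⟩
      rw [hh]; simp only
      rw [hwx₀, hε, div_mul_cancel₀ _ (ne_of_gt hWinpos)]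
      linarith
    rcases eq_or_lt_of_le hx₀A.2 with heq2 | hlt2
    · -- outer sphere
      have hwx₀ : efun c α x₀ - β = 0 := by
        rw [efun_eq_exp_qd, heq2, hβ, sub_self]
      rw [hh]; simp only
      rw [hwx₀, mul_zero, sub_zero]
      exact houter x₀ heq2
    · -- interior: contradiction with the minimum principle
      exfalso
      have hx₀Ω : x₀ ∈ Ω := hsub x₀ hlt2
      have hΩn : Ω ∈ 𝓝 x₀ := hΩ.mem_nhds hx₀Ω
      have hO : IsOpen {x : ℝ × ℝ | ρ ^ 2 / 4 < qd c x ∧ qd c x < ρ ^ 2} := by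
        have e : {x : ℝ × ℝ | ρ ^ 2 / 4 < qd c x ∧ qd c x < ρ ^ 2}
            = (qd c) ⁻¹' (Ioo (ρ ^ 2 / 4) (ρ ^ 2)) := rfl
        rw [e]; exact isOpen_Ioo.preimage (qd_continuous c)
      have hAn : {x : ℝ × ℝ | ρ ^ 2 / 4 ≤ qd c x ∧ qd c x ≤ ρ ^ 2} ∈ 𝓝 x₀ :=
        mem_of_superset (hO.mem_nhds ⟨hlt1, hlt2⟩) (fun y hy => ⟨hy.1.le, hy.2.le⟩)
      have hlocmin : IsLocalMin h x₀ := hx₀min.isLocalMin hAn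
      have hudiff : ∀ p ∈ Ω, DifferentiableAt ℝ u p := fun p hp =>
        ((hu2.contDiffAt (hΩ.mem_nhds hp)).differentiableAt (by norm_num))
      have hwdiff : ∀ p : ℝ × ℝ, DifferentiableAt ℝ (fun y => efun c α y - β) p := fun p =>
        ((efun_hasFDerivAt c α p).differentiableAt).sub_const β
      have hhdiff : ∀ p ∈ Ω, DifferentiableAt ℝ h p := by
        intro p hp
        rw [hh]
        exact (hudiff p hp).sub ((hwdiff p).const_mul ε)
      have hhdiffev : ∀ᶠ p in 𝓝 x₀, DifferentiableAt ℝ h p :=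
        eventually_of_mem hΩn hhdiff
      have hfz : fderiv ℝ h x₀ = 0 := hlocmin.fderiv_eq_zero
      have hpd1h : ∀ p ∈ Ω, pd1 h p
          = pd1 u p - ε * (-(2 * α * (p.1 - c.1)) * efun c α p) := by
        intro p hp
        have hdw := hwdiff p
        have e : fderiv ℝ h p
            = fderiv ℝ u p - ε • fderiv ℝ (fun y => efun c α y - β) p := by
          rw [hh, fderiv_fun_sub (hudiff p hp) (hdw.const_mul ε), fderiv_const_mul hdw ε]
        rw [pd1, e]
        simp only [ContinuousLinearMap.sub_apply, ContinuousLinearMap.coe_smul',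
          Pi.smul_apply, smul_eq_mul]
        rw [← pd1, ← pd1, congrFun (wfun_pd1 c α β) p]
      have hpd2h : ∀ p ∈ Ω, pd2 h p
          = pd2 u p - ε * (-(2 * α * (p.2 - c.2)) * efun c α p) := by
        intro p hp
        have hdw := hwdiff p
        have e : fderiv ℝ h p
            = fderiv ℝ u p - ε • fderiv ℝ (fun y => efun c α y - β) p := by
          rw [hh, fderiv_fun_sub (hudiff p hp) (hdw.const_mul ε), fderiv_const_mul hdw ε]
        rw [pd2, e]
        simp only [ContinuousLinearMap.sub_apply, ContinuousLinearMap.coe_smul',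
          Pi.smul_apply, smul_eq_mul]
        rw [← pd2, ← pd2, congrFun (wfun_pd2 c α β) p]
      have hcd2 : ContDiffAt ℝ 2 u x₀ := hu2.contDiffAt hΩn
      have hfd : DifferentiableAt ℝ (fderiv ℝ u) x₀ :=
        (hcd2.fderiv_right (m := 1) (by norm_num)).differentiableAt one_ne_zero
      have hpd1u_diff : DifferentiableAt ℝ (pd1 u) x₀ := by
        have e := hfd.clm_apply (differentiableAt_const ((1:ℝ), (0:ℝ)))
        exact e
      have hpd2u_diff : DifferentiableAt ℝ (pd2 u) x₀ := by
        have e := hfd.clm_apply (differentiableAt_const ((0:ℝ), (1:ℝ)))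
        exact e
      -- direction 1
      have hevF1 : pd1 h =ᶠ[𝓝 x₀]
          (fun p => pd1 u p - ε * (-(2 * α * (p.1 - c.1)) * efun c α p)) :=
        eventually_of_mem hΩn hpd1h
      have hF1diff : DifferentiableAt ℝ
          (fun p => pd1 u p - ε * (-(2 * α * (p.1 - c.1)) * efun c α p)) x₀ :=
        hpd1u_diff.sub ((W1_diff c α x₀).const_mul ε)
      have hpd1h_diff : DifferentiableAt ℝ (pd1 h) x₀ :=
        hevF1.differentiableAt_iff.mpr hF1diff
      have hsec1 := second_deriv_test_dir h x₀ (1, 0) hhdiffev hpd1h_diff hlocmin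
      have hfe1 : fderiv ℝ (pd1 h) x₀
          = fderiv ℝ (fun p => pd1 u p - ε * (-(2 * α * (p.1 - c.1)) * efun c α p)) x₀ :=
        hevF1.fderiv_eq
      have hsplit1 : fderiv ℝ
            (fun p => pd1 u p - ε * (-(2 * α * (p.1 - c.1)) * efun c α p)) x₀
          = fderiv ℝ (pd1 u) x₀
            - ε • fderiv ℝ (fun p => -(2 * α * (p.1 - c.1)) * efun c α p) x₀ := by
        rw [fderiv_fun_sub hpd1u_diff ((W1_diff c α x₀).const_mul ε),
          fderiv_const_mul (W1_diff c α x₀) ε]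
      have E1 : 0 ≤ pd1 (pd1 u) x₀
          - ε * ((-(2 * α) + 4 * α ^ 2 * (x₀.1 - c.1) ^ 2) * efun c α x₀) := by
        have e : fderiv ℝ (pd1 h) x₀ (1, 0) = pd1 (pd1 u) x₀
            - ε * ((-(2 * α) + 4 * α ^ 2 * (x₀.1 - c.1) ^ 2) * efun c α x₀) := by
          rw [hfe1, hsplit1]
          simp only [ContinuousLinearMap.sub_apply, ContinuousLinearMap.coe_smul',
            Pi.smul_apply, smul_eq_mul]
          rw [← pd1, ← pd1, W1_pd1]
        rw [← e]; exact hsec1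
      -- direction 2
      have hevF2 : pd2 h =ᶠ[𝓝 x₀]
          (fun p => pd2 u p - ε * (-(2 * α * (p.2 - c.2)) * efun c α p)) :=
        eventually_of_mem hΩn hpd2h
      have hF2diff : DifferentiableAt ℝ
          (fun p => pd2 u p - ε * (-(2 * α * (p.2 - c.2)) * efun c α p)) x₀ :=
        hpd2u_diff.sub ((W2_diff c α x₀).const_mul ε)
      have hpd2h_diff : DifferentiableAt ℝ (pd2 h) x₀ :=
        hevF2.differentiableAt_iff.mpr hF2diff
      have hsec2 := second_deriv_test_dir h x₀ (0, 1) hhdiffev hpd2h_diff hlocmin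
      have hfe2 : fderiv ℝ (pd2 h) x₀
          = fderiv ℝ (fun p => pd2 u p - ε * (-(2 * α * (p.2 - c.2)) * efun c α p)) x₀ :=
        hevF2.fderiv_eq
      have hsplit2 : fderiv ℝ
            (fun p => pd2 u p - ε * (-(2 * α * (p.2 - c.2)) * efun c α p)) x₀
          = fderiv ℝ (pd2 u) x₀
            - ε • fderiv ℝ (fun p => -(2 * α * (p.2 - c.2)) * efun c α p) x₀ := by
        rw [fderiv_fun_sub hpd2u_diff ((W2_diff c α x₀).const_mul ε),
          fderiv_const_mul (W2_diff c α x₀) ε]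
      have E2 : 0 ≤ pd2 (pd2 u) x₀
          - ε * ((-(2 * α) + 4 * α ^ 2 * (x₀.2 - c.2) ^ 2) * efun c α x₀) := by
        have e : fderiv ℝ (pd2 h) x₀ (0, 1) = pd2 (pd2 u) x₀
            - ε * ((-(2 * α) + 4 * α ^ 2 * (x₀.2 - c.2) ^ 2) * efun c α x₀) := by
          rw [hfe2, hsplit2]
          simp only [ContinuousLinearMap.sub_apply, ContinuousLinearMap.coe_smul',
            Pi.smul_apply, smul_eq_mul]
          rw [← pd2, ← pd2, W2_pd2]
        rw [← e]; exact hsec2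
      -- first derivative of u at x₀
      have hz1 : pd1 h x₀ = 0 := by rw [pd1, hfz]; simp
      have hz3 : pd1 u x₀ = ε * (-(2 * α * (x₀.1 - c.1)) * efun c α x₀) := by
        have e := hpd1h x₀ hx₀Ω
        rw [hz1] at e
        linarith [e]
      -- combine
      have hLux₀ : Lpolar u x₀ ≤ 0 := hLu x₀ hlt2
      have hLwx₀ : 0 < Lpolar (fun y => efun c α y - β) x₀ := hLw x₀ hx₀Ω hlt1.le hlt2.le
      have hcoords := hcoord x₀ hx₀Ω
      have hs0 : 0 < x₀.1 := hr₀.trans hcoords.1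
      rw [Lpolar_wfun] at hLwx₀
      rw [Lpolar] at hLux₀
      have hmul := mul_pos hεpos hLwx₀
      have t2 := mul_le_mul_of_nonneg_left E2 (by positivity : (0:ℝ) ≤ 1 / x₀.1 ^ 2)
      have t3 := congrArg (fun z => (1 / x₀.1) * z) hz3
      simp only [mul_zero, mul_sub] at t2
      nlinarith [E1, t2, t3, hmul, hLux₀]
  -- conclusion: differentiate along the segment from P to c
  have hhA : ∀ y : ℝ × ℝ, ρ ^ 2 / 4 ≤ qd c y → qd c y ≤ ρ ^ 2 → 0 ≤ h y :=
    fun y h1 h2 => le_trans hkey (isMinOn_iff.mp hx₀min y ⟨h1, h2⟩)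
  have hefP : efun c α P = β := by
    rw [efun_eq_exp_qd, hPc, hβ]
  have hhP0 : h P = 0 := by
    rw [hh]; simp only
    rw [hefP, sub_self, mul_zero, sub_zero, huP]
  have hudP : DifferentiableAt ℝ u P :=
    (hu1.contDiffAt (hV.mem_nhds (hVsub P (le_of_eq hPc)))).differentiableAt one_ne_zero
  set L : (ℝ × ℝ) →L[ℝ] ℝ :=
    (Real.exp (-(α * ((P.1 - c.1) ^ 2 + (P.2 - c.2) ^ 2))) •
        -(α • (((P.1 - c.1) • (ContinuousLinearMap.fst ℝ ℝ ℝ) +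
                (P.1 - c.1) • (ContinuousLinearMap.fst ℝ ℝ ℝ)) +
               ((P.2 - c.2) • (ContinuousLinearMap.snd ℝ ℝ ℝ) +
                (P.2 - c.2) • (ContinuousLinearMap.snd ℝ ℝ ℝ))))) with hL
  have hwP : HasFDerivAt (fun y => efun c α y - β) L P :=
    (efun_hasFDerivAt c α P).sub_const β
  have hhP : HasFDerivAt h (fderiv ℝ u P - ε • L) P := by
    rw [hh]
    exact hudP.hasFDerivAt.sub (hwP.const_mul ε)
  -- the path
  set φ : ℝ → ℝ × ℝ := fun t => (P.1 + t * (c.1 - P.1), P.2 + t * (c.2 - P.2)) with hφ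
  have hφ0 : φ 0 = P := by rw [hφ]; simp
  have hφd : ∀ t : ℝ, HasDerivAt φ ((c.1 - P.1, c.2 - P.2) : ℝ × ℝ) t := by
    intro t
    apply HasDerivAt.prodMk
    · simpa using ((hasDerivAt_id t).mul_const (c.1 - P.1)).const_add P.1
    · simpa using ((hasDerivAt_id t).mul_const (c.2 - P.2)).const_add P.2
  have hqφ : ∀ t : ℝ, qd c (φ t) = (1 - t) ^ 2 * ρ ^ 2 := by
    intro t
    rw [← hPc, hφ]; unfold qd; simp; ring
  have hgd : HasDerivAt (fun t => h (φ t))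
      ((fderiv ℝ u P - ε • L) (c.1 - P.1, c.2 - P.2)) 0 := by
    have e : HasFDerivAt h (fderiv ℝ u P - ε • L) (φ 0) := by rw [hφ0]; exact hhP
    exact e.comp_hasDerivAt 0 (hφd 0)
  have hD : 0 ≤ (fderiv ℝ u P - ε • L) (c.1 - P.1, c.2 - P.2) := by
    have hslope : Tendsto (slope (fun t => h (φ t)) 0) (𝓝[>] (0:ℝ))
        (𝓝 ((fderiv ℝ u P - ε • L) (c.1 - P.1, c.2 - P.2))) :=
      (hasDerivAt_iff_tendsto_slope.mp hgd).mono_left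
        (nhdsWithin_mono _ (fun t ht => ne_of_gt ht))
    refine ge_of_tendsto hslope ?_
    filter_upwards [Ioo_mem_nhdsGT_of_mem
      (show (0:ℝ) ∈ Ico 0 (1/2) by norm_num), self_mem_nhdsWithin] with t ht ht0
    have hb := helper_onemt hρ2 ht.1 ht.2
    have hg : 0 ≤ h (φ t) := hhA (φ t) (by rw [hqφ]; exact hb.1) (by rw [hqφ]; exact hb.2)
    have : slope (fun t => h (φ t)) 0 t = h (φ t) / t := by
      simp [slope, hφ0, hhP0, div_eq_inv_mul]
    rw [this]
    exact div_nonneg hg (le_of_lt ht0)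
  -- compute the barrier derivative term
  have happ : L (c.1 - P.1, c.2 - P.2)
      = Real.exp (-(α * ((P.1 - c.1) ^ 2 + (P.2 - c.2) ^ 2))) * (2 * α * ρ ^ 2) := by
    have hq : (P.1 - c.1) ^ 2 + (P.2 - c.2) ^ 2 = ρ ^ 2 := hPc
    rw [hL]
    simp only [ContinuousLinearMap.smul_apply, ContinuousLinearMap.neg_apply,
      ContinuousLinearMap.add_apply, ContinuousLinearMap.coe_smul', Pi.smul_apply,
      ContinuousLinearMap.coe_fst', ContinuousLinearMap.coe_snd', smul_eq_mul]
    linear_combination (2 * Real.exp (-(α * ((P.1 - c.1) ^ 2 + (P.2 - c.2) ^ 2))) * α) * hq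
  have hfin : 0 < fderiv ℝ u P (c.1 - P.1, c.2 - P.2) := by
    have e : (fderiv ℝ u P - ε • L) (c.1 - P.1, c.2 - P.2)
        = fderiv ℝ u P (c.1 - P.1, c.2 - P.2) - ε * (L (c.1 - P.1, c.2 - P.2)) := by
      simp
    rw [e, happ] at hD
    have hp1 : 0 < Real.exp (-(α * ((P.1 - c.1) ^ 2 + (P.2 - c.2) ^ 2))) * (2 * α * ρ ^ 2) := by
      positivity
    nlinarith [mul_pos hεpos hp1]
  exact hfin

lemma qd_nonneg (c x : ℝ × ℝ) : 0 ≤ qd c x := by unfold qd; positivity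

lemma qd_symm (c x : ℝ × ℝ) : qd c x = qd x c := by unfold qd; ring

lemma sqrt_qd_tri (a b x : ℝ × ℝ) :
    Real.sqrt (qd a x) ≤ Real.sqrt (qd a b) + Real.sqrt (qd b x) := by
  have h := sqrt_tri (b.1 - a.1) (b.2 - a.2) (x.1 - b.1) (x.2 - b.2)
  have e : (b.1 - a.1 + (x.1 - b.1)) ^ 2 + (b.2 - a.2 + (x.2 - b.2)) ^ 2 = qd a x := by
    unfold qd; ring
  rw [e] at h
  exact h

lemma qd_triangle_le {a b x : ℝ × ℝ} {r1 r2 : ℝ} (hr1 : 0 ≤ r1) (hr2 : 0 ≤ r2)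
    (h1 : qd a b ≤ r1 ^ 2) (h2 : qd b x ≤ r2 ^ 2) : qd a x ≤ (r1 + r2) ^ 2 := by
  have t := sqrt_qd_tri a b x
  have s1 : Real.sqrt (qd a b) ≤ r1 :=
    le_trans (Real.sqrt_le_sqrt h1) (le_of_eq (Real.sqrt_sq hr1))
  have s2 : Real.sqrt (qd b x) ≤ r2 :=
    le_trans (Real.sqrt_le_sqrt h2) (le_of_eq (Real.sqrt_sq hr2))
  have s3 : Real.sqrt (qd a x) ≤ r1 + r2 := by linarith
  calc qd a x = Real.sqrt (qd a x) ^ 2 := (Real.sq_sqrt (qd_nonneg a x)).symm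
    _ ≤ (r1 + r2) ^ 2 := by
        have := Real.sqrt_nonneg (qd a x); nlinarith

lemma qd_triangle_lt {a b x : ℝ × ℝ} {r1 r2 : ℝ} (hr1 : 0 ≤ r1) (hr2 : 0 < r2)
    (h1 : qd a b ≤ r1 ^ 2) (h2 : qd b x < r2 ^ 2) : qd a x < (r1 + r2) ^ 2 := by
  have t := sqrt_qd_tri a b x
  have s1 : Real.sqrt (qd a b) ≤ r1 :=
    le_trans (Real.sqrt_le_sqrt h1) (le_of_eq (Real.sqrt_sq hr1))
  have s2 : Real.sqrt (qd b x) < r2 := (Real.sqrt_lt' hr2).mpr h2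
  have s3 : Real.sqrt (qd a x) < r1 + r2 := by linarith
  calc qd a x = Real.sqrt (qd a x) ^ 2 := (Real.sq_sqrt (qd_nonneg a x)).symm
    _ < (r1 + r2) ^ 2 := by
        have := Real.sqrt_nonneg (qd a x); nlinarith

lemma dist_le_sqrt_qd (P x : ℝ × ℝ) : dist x P ≤ Real.sqrt (qd P x) := by
  rw [Prod.dist_eq]
  apply max_le
  · rw [Real.dist_eq, ← Real.sqrt_sq_eq_abs]
    apply Real.sqrt_le_sqrt
    unfold qd; nlinarith [sq_nonneg (x.2 - P.2)]
  · rw [Real.dist_eq, ← Real.sqrt_sq_eq_abs]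
    apply Real.sqrt_le_sqrt
    unfold qd; nlinarith [sq_nonneg (x.1 - P.1)]

lemma qd_ball_convex (c : ℝ × ℝ) (r : ℝ) : Convex ℝ {x : ℝ × ℝ | qd c x < r} := by
  intro x hx y hy a b ha hb hab
  simp only [mem_setOf_eq] at hx hy ⊢
  unfold qd at hx hy ⊢
  have h1 : (a • x + b • y).1 = a * x.1 + b * y.1 := by simp
  have h2 : (a • x + b • y).2 = a * x.2 + b * y.2 := by simp
  rw [h1, h2]
  rcases eq_or_lt_of_le ha with h0 | ha'
  · have hb1 : b = 1 := by linarith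
    rw [← h0, hb1]
    ring_nf
    ring_nf at hy
    linarith [hy]
  · have e1 : a * x.1 + b * y.1 - c.1 = a * (x.1 - c.1) + b * (y.1 - c.1) := by
      linear_combination c.1 * hab
    have e2 : a * x.2 + b * y.2 - c.2 = a * (x.2 - c.2) + b * (y.2 - c.2) := by
      linear_combination c.2 * hab
    rw [e1, e2]
    have key1 : a * (x.1 - c.1) ^ 2 + b * (y.1 - c.1) ^ 2
        - (a * (x.1 - c.1) + b * (y.1 - c.1)) ^ 2
        = a * b * ((x.1 - c.1) - (y.1 - c.1)) ^ 2 := by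
      linear_combination (-(a * (x.1 - c.1) ^ 2 + b * (y.1 - c.1) ^ 2)) * hab
    have key2 : a * (x.2 - c.2) ^ 2 + b * (y.2 - c.2) ^ 2
        - (a * (x.2 - c.2) + b * (y.2 - c.2)) ^ 2
        = a * b * ((x.2 - c.2) - (y.2 - c.2)) ^ 2 := by
      linear_combination (-(a * (x.2 - c.2) ^ 2 + b * (y.2 - c.2) ^ 2)) * hab
    have habr : a * r + b * r = r := by linear_combination r * hab
    have t1 := mul_lt_mul_of_pos_left hx ha'
    have t2 := mul_le_mul_of_nonneg_left hy.le hb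
    have n1 : 0 ≤ a * b * ((x.1 - c.1) - (y.1 - c.1)) ^ 2 :=
      mul_nonneg (mul_nonneg ha hb) (sq_nonneg _)
    have n2 : 0 ≤ a * b * ((x.2 - c.2) - (y.2 - c.2)) ^ 2 :=
      mul_nonneg (mul_nonneg ha hb) (sq_nonneg _)
    nlinarith [key1, key2, habr, t1, t2, n1, n2]

lemma pd1_neg (f : ℝ × ℝ → ℝ) : pd1 (fun x => -f x) = fun p => -pd1 f p := by
  funext p; rw [pd1, fderiv_fun_neg]; simp [pd1]

lemma pd2_neg (f : ℝ × ℝ → ℝ) : pd2 (fun x => -f x) = fun p => -pd2 f p := by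
  funext p; rw [pd2, fderiv_fun_neg]; simp [pd2]

lemma Lpolar_neg (f : ℝ × ℝ → ℝ) (p : ℝ × ℝ) :
    Lpolar (fun x => -f x) p = -Lpolar f p := by
  rw [Lpolar, Lpolar, pd1_neg f, pd2_neg f, pd1_neg (pd1 f), pd2_neg (pd2 f)]
  simp only [congrFun (pd1_neg f) p]
  ring


theorem hopf_nonzero_derivative_polar
    (r₀ : ℝ) (hr₀ : 0 < r₀)
    (Ω : Set (ℝ × ℝ)) (hΩsub : ∀ p ∈ Ω, r₀ < p.1)
    (hΩ : IsOpen Ω) (hΩbd : Bornology.IsBounded Ω)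
    (lam : ℝ) (hlam : 0 ≤ lam)
    (P : ℝ × ℝ) (hP : P ∈ frontier Ω) (hball : InteriorBall Ω P)
    (u : ℝ × ℝ → ℝ)
    (V : Set (ℝ × ℝ)) (hV : IsOpen V) (hPV : P ∈ V) (hu1 : ContDiffOn ℝ 1 u V)
    (hu2 : ContDiffOn ℝ 2 u Ω)
    (heq : ∀ p ∈ Ω, Lpolar u p + lam * u p = 0)
    (huP : u P = 0)
    (hnod : P ∉ closure {p ∈ Ω | u p = 0}) :
    fderiv ℝ u P ≠ 0 := by
  obtain ⟨cc, ρ, hρpos, hballsub, hPsph⟩ := hball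
  -- bound on the first coordinate
  obtain ⟨R, hRB⟩ := hΩbd.subset_closedBall 0
  have hR : ∀ x ∈ Ω, x.1 ≤ R := by
    intro x hx
    have := hRB hx
    rw [Metric.mem_closedBall, dist_zero_right] at this
    exact le_trans (le_trans (le_abs_self _) (norm_fst_le x)) this
  have hcoord : ∀ x ∈ Ω, r₀ < x.1 ∧ x.1 ≤ R := fun x hx => ⟨hΩsub x hx, hR x hx⟩
  -- radius of non-vanishing
  obtain ⟨δ, hδpos, hδ⟩ := Metric.isOpen_iff.mp isClosed_closure.isOpen_compl P hnod
  obtain ⟨δV, hδVpos, hδV⟩ := Metric.isOpen_iff.mp hV P hPV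
  set ρ' : ℝ := min ρ (min (δ / 3) (δV / 3)) with hρ'
  have hρ'pos : 0 < ρ' := by
    apply lt_min hρpos (lt_min (by linarith) (by linarith))
  have hρ'ρ : ρ' ≤ ρ := min_le_left _ _
  have hρ'δ : ρ' ≤ δ / 3 := le_trans (min_le_right _ _) (min_le_left _ _)
  have hρ'δV : ρ' ≤ δV / 3 := le_trans (min_le_right _ _) (min_le_right _ _)
  set c' : ℝ × ℝ := (P.1 + (ρ' / ρ) * (cc.1 - P.1), P.2 + (ρ' / ρ) * (cc.2 - P.2)) with hc'
  -- key quadratic facts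
  have hqdP : qd cc P = ρ ^ 2 := hPsph
  have hqc'P : qd c' P = ρ' ^ 2 := by
    have e : qd c' P = (ρ' / ρ) ^ 2 * ((P.1 - cc.1) ^ 2 + (P.2 - cc.2) ^ 2) := by
      rw [hc']; unfold qd; simp only; ring
    rw [e, hPsph]
    field_simp
  have hqccc' : qd cc c' = (ρ - ρ') ^ 2 := by
    have e : qd cc c' = (1 - ρ' / ρ) ^ 2 * ((P.1 - cc.1) ^ 2 + (P.2 - cc.2) ^ 2) := by
      rw [hc']; unfold qd; simp only; ring
    rw [e, hPsph]
    field_simp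
  -- the small ball sits inside Ω
  have hsub' : ∀ x, qd c' x < ρ' ^ 2 → x ∈ Ω := by
    intro x hx
    have h := qd_triangle_lt (by linarith : (0:ℝ) ≤ ρ - ρ') hρ'pos (le_of_eq hqccc') hx
    have e : ρ - ρ' + ρ' = ρ := by ring
    rw [e] at h
    exact hballsub h
  -- the closed small ball sits inside V and inside the δ-ball around P
  have hqP : ∀ x, qd c' x ≤ ρ' ^ 2 → qd P x ≤ (2 * ρ') ^ 2 := by
    intro x hx
    have h := qd_triangle_le hρ'pos.le hρ'pos.le
      (le_of_eq ((qd_symm P c') ▸ hqc'P)) hx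
    calc qd P x ≤ (ρ' + ρ') ^ 2 := h
      _ = (2 * ρ') ^ 2 := by ring
  have hdistP : ∀ x, qd c' x ≤ ρ' ^ 2 → dist x P ≤ 2 * ρ' := by
    intro x hx
    refine le_trans (dist_le_sqrt_qd P x) ?_
    refine le_trans (Real.sqrt_le_sqrt (hqP x hx)) (le_of_eq ?_)
    exact Real.sqrt_sq (by linarith)
  have hVsub' : ∀ x, qd c' x ≤ ρ' ^ 2 → x ∈ V := by
    intro x hx
    apply hδV
    rw [Metric.mem_ball]
    have := hdistP x hx
    linarith
  have hune : ∀ x, qd c' x < ρ' ^ 2 → u x ≠ 0 := by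
    intro x hx hux
    have hxΩ : x ∈ Ω := hsub' x hx
    have hmem : x ∈ Metric.ball P δ := by
      rw [Metric.mem_ball]
      have := hdistP x hx.le
      linarith
    exact (hδ hmem) (subset_closure ⟨hxΩ, hux⟩)
  -- u never vanishes on the small ball, which is connected: constant sign
  have hc'mem : qd c' c' < ρ' ^ 2 := by
    have : qd c' c' = 0 := by unfold qd; ring
    rw [this]; positivity
  have hBconn : IsPreconnected {x : ℝ × ℝ | qd c' x < ρ' ^ 2} :=
    (qd_ball_convex c' (ρ' ^ 2)).isPreconnected
  have hBΩ : {x : ℝ × ℝ | qd c' x < ρ' ^ 2} ⊆ Ω := fun x hx => hsub' x hx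
  have hBcont : ContinuousOn u {x : ℝ × ℝ | qd c' x < ρ' ^ 2} :=
    hu2.continuousOn.mono hBΩ
  rcases lt_trichotomy (u c') 0 with hneg | hzero | hpos
  · -- u < 0 on the ball: apply the core lemma to -u
    have huneg : ∀ x, qd c' x < ρ' ^ 2 → u x < 0 := by
      intro x hx
      rcases lt_trichotomy (u x) 0 with h | h | h
      · exact h
      · exact absurd h (hune x hx)
      · exfalso
        obtain ⟨z, hz, hz0⟩ := hBconn.intermediate_value₂ hc'mem hx hBcont
          continuousOn_const (le_of_lt hneg) (le_of_lt h)
        exact hune z hz hz0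
    have hv1 : ContDiffOn ℝ 1 (fun x => -u x) V := hu1.neg
    have hv2 : ContDiffOn ℝ 2 (fun x => -u x) Ω := hu2.neg
    have hLv : ∀ x, qd c' x < ρ' ^ 2 → Lpolar (fun y => -u y) x ≤ 0 := by
      intro x hx
      rw [Lpolar_neg]
      have he := heq x (hsub' x hx)
      have hu0 := huneg x hx
      nlinarith [mul_nonneg hlam (neg_nonneg.mpr hu0.le)]
    have hvpos : ∀ x, qd c' x < ρ' ^ 2 → 0 < -u x := fun x hx =>
      neg_pos.mpr (huneg x hx)
    have hcore := hopf_core r₀ R hr₀ Ω hΩ c' P ρ' hρ'pos hqc'P hsub' hcoord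
      (fun x => -u x) V hV hVsub' hv1 hv2 hLv hvpos (by simp [huP])
    intro hzero'
    rw [fderiv_fun_neg, hzero'] at hcore
    simp at hcore
  · exact absurd hzero (hune c' hc'mem)
  · -- u > 0 on the ball: apply the core lemma to u
    have hupos : ∀ x, qd c' x < ρ' ^ 2 → 0 < u x := by
      intro x hx
      rcases lt_trichotomy (u x) 0 with h | h | h
      · exfalso
        obtain ⟨z, hz, hz0⟩ := hBconn.intermediate_value₂ hx hc'mem hBcont
          continuousOn_const (le_of_lt h) (le_of_lt hpos)
        exact hune z hz hz0
      · exact absurd h (hune x hx)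
      · exact h
    have hLu : ∀ x, qd c' x < ρ' ^ 2 → Lpolar u x ≤ 0 := by
      intro x hx
      have he := heq x (hsub' x hx)
      nlinarith [mul_nonneg hlam (hupos x hx).le]
    have hcore := hopf_core r₀ R hr₀ Ω hΩ c' P ρ' hρ'pos hqc'P hsub' hcoord
      u V hV hVsub' hu1 hu2 hLu hupos huP
    intro hzero'
    rw [hzero'] at hcore
    simp at hcore
end

section
/- Let Ω̃ ⊆ ℝ² be open and bounded, symmetric under the reflection σ(r,θ) = (r,−θ), and convex in θ, meaning that for every r ∈ ℝ the slice {θ ∈ ℝ : (r,θ) ∈ Ω̃} is a convex set. Let u : ℝ² → ℝ be continuous on the closure of Ω̃, with u = 0 on ∂Ω̃, even in θ (u(r,−θ) = u(r,θ) for all (r,θ) in the closure of Ω̃), differentiable at every point of Ω̃, and such that ∂u/∂θ(r,θ) ≥ 0 for every (r,θ) ∈ Ω̃ with θ < 0. Then u ≥ 0 on the closure of Ω̃. Consequently, if instead u is as above except that u attains a strictly negative value on Ω̃, then there exists (r,θ) ∈ Ω̃ with θ < 0 and ∂u/∂θ(r,θ) < 0. -/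
theorem even_monotone_nonnegative_and_consequence
    (Ω : Set (ℝ × ℝ)) (hΩ : IsOpen Ω) (hΩbd : Bornology.IsBounded Ω)
    (hsym : ∀ p : ℝ × ℝ, p ∈ Ω ↔ (p.1, -p.2) ∈ Ω)
    (hconv : ∀ r : ℝ, Convex ℝ {θ : ℝ | (r, θ) ∈ Ω}) :
    -- main claim: u ≥ 0 on the closure of Ω
    (∀ u : ℝ × ℝ → ℝ,
      ContinuousOn u (closure Ω) →
      (∀ p ∈ frontier Ω, u p = 0) →
      (∀ p ∈ closure Ω, u (p.1, -p.2) = u p) →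
      (∀ p ∈ Ω, DifferentiableAt ℝ u p) →
      (∀ p ∈ Ω, p.2 < 0 → 0 ≤ pd2 u p) →
      ∀ p ∈ closure Ω, 0 ≤ u p) ∧
    -- consequence: if u takes a negative value, ∂u/∂θ is somewhere negative for θ < 0
    (∀ u : ℝ × ℝ → ℝ,
      ContinuousOn u (closure Ω) →
      (∀ p ∈ frontier Ω, u p = 0) →
      (∀ p ∈ closure Ω, u (p.1, -p.2) = u p) →
      (∀ p ∈ Ω, DifferentiableAt ℝ u p) →
      (∃ p ∈ Ω, u p < 0) →
      ∃ p ∈ Ω, p.2 < 0 ∧ pd2 u p < 0) := by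
  have key : ∀ u : ℝ × ℝ → ℝ,
      ContinuousOn u (closure Ω) →
      (∀ p ∈ frontier Ω, u p = 0) →
      (∀ p ∈ closure Ω, u (p.1, -p.2) = u p) →
      (∀ p ∈ Ω, DifferentiableAt ℝ u p) →
      (∀ p ∈ Ω, p.2 < 0 → 0 ≤ pd2 u p) →
      ∀ p ∈ closure Ω, 0 ≤ u p := by
    intro u hcont hbd heven hdiff hderiv
    have hσcont : Continuous (fun p : ℝ × ℝ => (p.1, -p.2)) := continuous_fst.prodMk continuous_snd.neg
    have hclsym : ∀ p ∈ closure Ω, ((p.1 : ℝ), -p.2) ∈ closure Ω := by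
      intro p hp
      have h1 : Ω = (fun p : ℝ × ℝ => (p.1, -p.2)) ⁻¹' Ω := by
        ext q; exact hsym q
      have h2 : closure Ω ⊆ (fun p : ℝ × ℝ => (p.1, -p.2)) ⁻¹' closure Ω := by
        nth_rewrite 1 [h1]
        exact hσcont.closure_preimage_subset Ω
      exact h2 hp
    have half : ∀ p ∈ closure Ω, p.2 ≤ 0 → 0 ≤ u p := by
      rintro ⟨r, θ⟩ hp hθ0
      by_cases hpΩ : (r, θ) ∈ Ω
      · set S : Set ℝ := {t : ℝ | (r, t) ∈ Ω} with hSdef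
        have hf : Continuous (fun t : ℝ => ((r : ℝ), t)) := (continuous_const : Continuous fun _ : ℝ => r).prodMk continuous_id
        have hSopen : IsOpen S := hΩ.preimage hf
        have hθS : θ ∈ S := hpΩ
        obtain ⟨C, hC⟩ := hΩbd.exists_norm_le
        have hbdd : BddBelow S := by
          refine ⟨-C, fun t ht => ?_⟩
          have h1 : ‖((r : ℝ), t)‖ ≤ C := hC _ ht
          have h2 : |t| ≤ ‖((r : ℝ), t)‖ := norm_snd_le ((r : ℝ), t)
          have := abs_le.1 (h2.trans h1)
          linarith [this.1]
        set c : ℝ := sInf S with hcdef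
        have hcθ : c < θ := by
          obtain ⟨ε, hε, hball⟩ := Metric.isOpen_iff.1 hSopen θ hθS
          have hmem : θ - ε / 2 ∈ S := by
            apply hball
            rw [Metric.mem_ball, Real.dist_eq,
              show θ - ε / 2 - θ = -(ε / 2) by ring, abs_neg, abs_of_pos (by linarith)]
            linarith
          have := csInf_le hbdd hmem
          linarith
        have hcS : c ∉ S := by
          intro hc
          obtain ⟨ε, hε, hball⟩ := Metric.isOpen_iff.1 hSopen c hc
          have hmem : c - ε / 2 ∈ S := by
            apply hball
            rw [Metric.mem_ball, Real.dist_eq,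
              show c - ε / 2 - c = -(ε / 2) by ring, abs_neg, abs_of_pos (by linarith)]
            linarith
          have := csInf_le hbdd hmem
          linarith
        have hsub : ∀ t : ℝ, c < t → t ≤ θ → t ∈ S := by
          intro t hct htθ
          obtain ⟨s, hsS, hst⟩ := exists_lt_of_csInf_lt ⟨θ, hθS⟩ hct
          have hseg : Set.Icc s θ ⊆ S := by
            rw [← segment_eq_Icc (hst.le.trans htθ)]
            exact (hconv r).segment_subset hsS hθS
          exact hseg ⟨hst.le, htθ⟩
        have hcl : ((r : ℝ), c) ∈ closure Ω := by
          have hc1 : c ∈ closure S := csInf_mem_closure ⟨θ, hθS⟩ hbdd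
          have hc2 : closure S ⊆ (fun t : ℝ => ((r : ℝ), t)) ⁻¹' closure Ω :=
            hf.closure_preimage_subset Ω
          exact hc2 hc1
        have hfr : ((r : ℝ), c) ∈ frontier Ω := by
          rw [hΩ.frontier_eq]
          exact ⟨hcl, hcS⟩
        set g : ℝ → ℝ := fun t => u ((r : ℝ), t) with hgdef
        have gmaps : Set.MapsTo (fun t : ℝ => ((r : ℝ), t)) (Set.Icc c θ) (closure Ω) := by
          intro t ht
          rcases eq_or_lt_of_le ht.1 with h | h
          · rw [← h]; exact hcl
          · exact subset_closure (hsub t h ht.2)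
        have gcont : ContinuousOn g (Set.Icc c θ) :=
          hcont.comp hf.continuousOn gmaps
        have gderiv : ∀ t ∈ Set.Ioo c θ, HasDerivAt g (pd2 u ((r : ℝ), t)) t := by
          intro t ht
          have htΩ : ((r : ℝ), t) ∈ Ω := hsub t ht.1 ht.2.le
          have hft : HasDerivAt (fun t : ℝ => ((r : ℝ), t)) ((0 : ℝ), (1 : ℝ)) t :=
            (hasDerivAt_const t (r : ℝ)).prodMk (hasDerivAt_id t)
          exact (hdiff _ htΩ).hasFDerivAt.comp_hasDerivAt t hft
        have gmono : MonotoneOn g (Set.Icc c θ) := by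
          apply monotoneOn_of_deriv_nonneg (convex_Icc c θ) gcont
          · rw [interior_Icc]
            intro t ht
            exact (gderiv t ht).differentiableAt.differentiableWithinAt
          · rw [interior_Icc]
            intro t ht
            rw [(gderiv t ht).deriv]
            exact hderiv _ (hsub t ht.1 ht.2.le) (by simpa using lt_of_lt_of_le ht.2 hθ0)
        have h0 : g c = 0 := hbd _ hfr
        have := gmono (Set.left_mem_Icc.2 hcθ.le) (Set.right_mem_Icc.2 hcθ.le) hcθ.le
        rw [h0] at this
        exact this
      · have hfr : ((r : ℝ), θ) ∈ frontier Ω := by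
          rw [hΩ.frontier_eq]; exact ⟨hp, hpΩ⟩
        rw [hbd _ hfr]
    intro p hp
    rcases le_or_gt p.2 0 with h | h
    · exact half p hp h
    · have h1 : ((p.1 : ℝ), -p.2) ∈ closure Ω := hclsym p hp
      have h2 : 0 ≤ u (p.1, -p.2) := half _ h1 (by simp [h.le])
      rw [heven p hp] at h2
      exact h2
  refine ⟨key, ?_⟩
  intro u hcont hbd heven hdiff ⟨p, hpΩ, hup⟩
  by_contra h
  push_neg at h
  have := key u hcont hbd heven hdiff
    (fun q hq hq2 => le_of_not_gt fun hlt => absurd hlt (not_lt.2 (h q hq hq2)))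
    p (subset_closure hpΩ)
  linarith
end
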